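/- arXiv:2405.12201 — 6 statements merged into one kernel-verified Lean document; each statement's English description precedes it below -/
import Mathlib

section
/- Let B be a ℤ-graded bialgebra over a field k satisfying the twisting conditions, and let {α_i : B → k}_{i∈ℤ} be a family of linear functionals, each convolution invertible with convolution inverse α_i^{-1}. Then the following four conditions are equivalent (each quantified over all i, j ∈ ℤ, all homogeneous a ∈ B_j, and all b ∈ B): (1) Σ α_i(a·b_1)·α_j(b_2) = α_i(a)·α_{i+j}(b); (2) α_i(ab) = α_i(a)·(α_{i+j} * α_j^{-1})(b); (3) α_i^{-1}(ab) = α_i^{-1}(a)·(α_j * α_{i+j}^{-1})(b); (4) Σ α_i^{-1}(a·b_1)·α_{i+j}(b_2) = α_i^{-1}(a)·α_j(b). -/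
open TensorProduct

/-- Convolution product of linear functionals on a coalgebra. -/
noncomputable def conv {k B : Type*} [CommSemiring k] [AddCommMonoid B] [Module k B]
    [Coalgebra k B] (f g : B →ₗ[k] k) : B →ₗ[k] k :=
  LinearMap.mul' k k ∘ₗ TensorProduct.map f g ∘ₗ Coalgebra.comul

section ConvLemmas

variable {k B : Type*} [CommSemiring k] [AddCommMonoid B] [Module k B] [Coalgebra k B]

lemma conv_apply (f g : B →ₗ[k] k) (a : B) :
    conv f g a = LinearMap.mul' k k (TensorProduct.map f g (Coalgebra.comul a)) := rfl

lemma conv_apply_repr (f g : B →ₗ[k] k) {a : B} {ι : Type*} (ra : Coalgebra.Repr k a ι) :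
    conv f g a = ∑ t ∈ ra.index, f (ra.left t) * g (ra.right t) := by
  rw [conv_apply, ← ra.eq]
  simp [map_sum]

lemma conv_add_left (f f' g : B →ₗ[k] k) : conv (f + f') g = conv f g + conv f' g := by
  ext a; simp [conv_apply, TensorProduct.map_add_left]

lemma conv_add_right (f g g' : B →ₗ[k] k) : conv f (g + g') = conv f g + conv f g' := by
  ext a; simp [conv_apply, TensorProduct.map_add_right]

lemma conv_smul_left (c : k) (f g : B →ₗ[k] k) : conv (c • f) g = c • conv f g := by
  ext a; simp [conv_apply, TensorProduct.map_smul_left]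

lemma conv_smul_right (c : k) (f g : B →ₗ[k] k) : conv f (c • g) = c • conv f g := by
  ext a; simp [conv_apply, TensorProduct.map_smul_right]

/-- Convolution as a bilinear map. -/
noncomputable def convBil : (B →ₗ[k] k) →ₗ[k] (B →ₗ[k] k) →ₗ[k] (B →ₗ[k] k) :=
  LinearMap.mk₂ k conv conv_add_left conv_smul_left conv_add_right conv_smul_right

@[simp] lemma convBil_apply (f g : B →ₗ[k] k) : convBil f g = conv f g := rfl

lemma conv_counit_right (f : B →ₗ[k] k) : conv f Coalgebra.counit = f := by
  ext a
  have h := congrArg (LinearMap.mul' k k)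
    (Coalgebra.sum_map_tmul_counit_eq (R := k) f a (repr := Coalgebra.Repr.arbitrary k a))
  simp only [map_sum, LinearMap.mul'_apply] at h
  rw [conv_apply_repr f Coalgebra.counit (Coalgebra.Repr.arbitrary k a), h, mul_one]

lemma conv_counit_left (f : B →ₗ[k] k) : conv Coalgebra.counit f = f := by
  ext a
  have h := congrArg (LinearMap.mul' k k)
    (Coalgebra.sum_counit_tmul_map_eq (R := k) f a (repr := Coalgebra.Repr.arbitrary k a))
  simp only [map_sum, LinearMap.mul'_apply] at h
  rw [conv_apply_repr Coalgebra.counit f (Coalgebra.Repr.arbitrary k a), h, one_mul]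

lemma conv_assoc (f g h : B →ₗ[k] k) : conv (conv f g) h = conv f (conv g h) := by
  ext a
  set ra := Coalgebra.Repr.arbitrary k a
  set a₁ : (t : B × B) → Coalgebra.Repr k (ra.left t) (B × B) := fun t => Coalgebra.Repr.arbitrary k _
  set a₂ : (t : B × B) → Coalgebra.Repr k (ra.right t) (B × B) := fun t => Coalgebra.Repr.arbitrary k _
  have key := Coalgebra.sum_map_tmul_tmul_eq (R := k) f g h a (repr := ra) (a₁ := a₁) (a₂ := a₂)
  have key2 := congrArg (LinearMap.mul' k k ∘ₗ LinearMap.lTensor k (LinearMap.mul' k k)) key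
  simp only [map_sum, LinearMap.comp_apply, LinearMap.lTensor_tmul, LinearMap.mul'_apply] at key2
  calc conv (conv f g) h a
      = ∑ t ∈ ra.index, (conv f g) (ra.left t) * h (ra.right t) := conv_apply_repr _ _ ra
    _ = ∑ t ∈ ra.index, ∑ s ∈ (a₁ t).index,
          f ((a₁ t).left s) * (g ((a₁ t).right s) * h (ra.right t)) := by
        refine Finset.sum_congr rfl fun t _ => ?_
        rw [conv_apply_repr f g (a₁ t), Finset.sum_mul]
        exact Finset.sum_congr rfl fun s _ => mul_assoc _ _ _
    _ = ∑ t ∈ ra.index, ∑ s ∈ (a₂ t).index,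
          f (ra.left t) * (g ((a₂ t).left s) * h ((a₂ t).right s)) := key2.symm
    _ = conv f (conv g h) a := by
        rw [conv_apply_repr f (conv g h) ra]
        refine Finset.sum_congr rfl fun t _ => ?_
        rw [conv_apply_repr g h (a₂ t), Finset.mul_sum]

end ConvLemmas

section BialgLemmas

variable {k B : Type*} [CommSemiring k] [Semiring B] [Bialgebra k B]

lemma conv_mul_apply (f g : B →ₗ[k] k) {a : B} {ι : Type*} (ra : Coalgebra.Repr k a ι) (b : B) :
    conv f g (a * b) = ∑ t ∈ ra.index,
      conv (f ∘ₗ LinearMap.mulLeft k (ra.left t)) (g ∘ₗ LinearMap.mulLeft k (ra.right t)) b := by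
  have key : ∀ (x y : B) (z : B ⊗[k] B),
      TensorProduct.map f g ((x ⊗ₜ[k] y) * z) =
      TensorProduct.map (f ∘ₗ LinearMap.mulLeft k x) (g ∘ₗ LinearMap.mulLeft k y) z := by
    intro x y z
    induction z using TensorProduct.induction_on with
    | zero => simp
    | tmul u v => simp [Algebra.TensorProduct.tmul_mul_tmul]
    | add u v hu hv => rw [mul_add, map_add, hu, hv, map_add]
  rw [conv_apply, Bialgebra.comul_mul, ← ra.eq, Finset.sum_mul, map_sum, map_sum]
  exact Finset.sum_congr rfl fun t _ => by rw [key, ← conv_apply]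

end BialgLemmas

section Easy

variable {k B : Type*} [CommSemiring k] [AddCommMonoid B] [Module k B] [Coalgebra k B]

lemma easy1 (β γ δ μ : B →ₗ[k] k) (c : k) (hγδ : conv γ δ = Coalgebra.counit)
    (h : conv β γ = c • μ) : β = c • conv μ δ := by
  calc β = conv β Coalgebra.counit := (conv_counit_right β).symm
    _ = conv β (conv γ δ) := by rw [hγδ]
    _ = conv (conv β γ) δ := (conv_assoc _ _ _).symm
    _ = conv (c • μ) δ := by rw [h]
    _ = c • conv μ δ := conv_smul_left _ _ _

lemma easy2 (β γ δ μ : B →ₗ[k] k) (c : k) (hδγ : conv δ γ = Coalgebra.counit)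
    (h : β = c • conv μ δ) : conv β γ = c • μ := by
  rw [h, conv_smul_left, conv_assoc, hδγ, conv_counit_right]

lemma conv_conv_conv (f g g' f' : B →ₗ[k] k) (h : conv g g' = Coalgebra.counit)
    (h2 : conv f f' = Coalgebra.counit) : conv (conv f g) (conv g' f') = Coalgebra.counit := by
  rw [conv_assoc, ← conv_assoc g g' f', h, conv_counit_left, h2]

end Easy

section Key

variable {k B : Type*} [Field k] [Ring B] [Bialgebra k B]

lemma exists_finset_subRepr (N : Submodule k B)
    (hN : ∀ x ∈ N, Coalgebra.comul (R := k) x ∈ LinearMap.range (TensorProduct.mapIncl N N))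
    {x : B} (hx : x ∈ N) :
    ∃ S : Finset (N × N), ∑ p ∈ S, (p.1 : B) ⊗ₜ[k] (p.2 : B) = Coalgebra.comul (R := k) x := by
  obtain ⟨w, hw⟩ := hN x hx
  obtain ⟨S, hS⟩ := TensorProduct.exists_finset w
  refine ⟨S, ?_⟩
  rw [← hw, hS, map_sum]
  simp [TensorProduct.mapIncl]

/-- A Sweedler representation of `x` with components in `N`. -/
noncomputable def subRepr (N : Submodule k B)
    (hN : ∀ x ∈ N, Coalgebra.comul (R := k) x ∈ LinearMap.range (TensorProduct.mapIncl N N))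
    {x : B} (hx : x ∈ N) : Coalgebra.Repr k x (N × N) where
  index := (exists_finset_subRepr N hN hx).choose
  left := fun p => (p.1 : B)
  right := fun p => (p.2 : B)
  eq := (exists_finset_subRepr N hN hx).choose_spec

lemma subRepr_left_mem (N : Submodule k B)
    (hN : ∀ x ∈ N, Coalgebra.comul (R := k) x ∈ LinearMap.range (TensorProduct.mapIncl N N))
    {x : B} (hx : x ∈ N) (s : N × N) : (subRepr N hN hx).left s ∈ N :=
  s.1.2

lemma subRepr_right_mem (N : Submodule k B)
    (hN : ∀ x ∈ N, Coalgebra.comul (R := k) x ∈ LinearMap.range (TensorProduct.mapIncl N N))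
    {x : B} (hx : x ∈ N) (s : N × N) : (subRepr N hN hx).right s ∈ N :=
  s.2.2

lemma key (N : Submodule k B)
    (hN : ∀ x ∈ N, Coalgebra.comul (R := k) x ∈ LinearMap.range (TensorProduct.mapIncl N N))
    (f g p q : B →ₗ[k] k)
    (h1 : conv f g = Coalgebra.counit)
    (h2 : conv g f = Coalgebra.counit)
    (h3 : conv p q = Coalgebra.counit)
    (h4 : ∀ v ∈ N, g ∘ₗ LinearMap.mulLeft k v = g v • q)
    {a : B} (ha : a ∈ N) :
    f ∘ₗ LinearMap.mulLeft k a = f a • p := by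
  classical
  set ra : Coalgebra.Repr k a (N × N) := subRepr N hN ha with hra
  set a₁ : (t : N × N) → Coalgebra.Repr k (ra.left t) (N × N) :=
    fun t => subRepr N hN t.1.2 with ha₁
  set a₂ : (t : N × N) → Coalgebra.Repr k (ra.right t) (B × B) :=
    fun t => Coalgebra.Repr.arbitrary k _ with ha₂
  have ha₁mem : ∀ (t : N × N) (s : N × N), (a₁ t).right s ∈ N := fun t s => s.2.2
  -- the trilinear map Λ
  set Gmap : B →ₗ[k] (B →ₗ[k] k) := (LinearMap.llcomp k B B k f) ∘ₗ (LinearMap.mul k B) with hGmap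
  set Fmap : B →ₗ[k] (B →ₗ[k] k) := (LinearMap.llcomp k B B k g) ∘ₗ (LinearMap.mul k B) with hFmap
  set G'map : B →ₗ[k] (B →ₗ[k] k) := LinearMap.smulRight f p with hG'map
  set Λ : B ⊗[k] (B ⊗[k] B) →ₗ[k] (B →ₗ[k] k) :=
    TensorProduct.lift (((convBil (k := k) (B := B)) ∘ₗ G'map).compl₂
      (TensorProduct.lift (((convBil (k := k) (B := B)) ∘ₗ Fmap).compl₂ Gmap))) with hΛ
  have hΛ_apply : ∀ c d e : B, Λ (c ⊗ₜ[k] (d ⊗ₜ[k] e)) =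
      conv (f c • p) (conv (g ∘ₗ LinearMap.mulLeft k d) (f ∘ₗ LinearMap.mulLeft k e)) := by
    intro c d e
    simp only [hΛ, TensorProduct.lift.tmul, LinearMap.compl₂_apply, LinearMap.comp_apply,
      convBil_apply, hG'map, LinearMap.smulRight_apply, hFmap, hGmap, LinearMap.llcomp_apply]
    congr 2
  -- auxiliary counit identities
  have haux1 : ∑ t ∈ ra.index, Coalgebra.counit (R := k) (ra.left t) • (ra.right t) = a := by
    have h := congrArg (TensorProduct.lid k B) (Coalgebra.sum_counit_tmul_eq (R := k) ra)
    rw [map_sum] at h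
    simpa only [TensorProduct.lid_tmul, one_smul] using h
  have haux2 : ∑ t ∈ ra.index, Coalgebra.counit (R := k) (ra.right t) • (ra.left t) = a := by
    have h := congrArg (TensorProduct.rid k B) (Coalgebra.sum_tmul_counit_eq (R := k) ra)
    rw [map_sum] at h
    simpa only [TensorProduct.rid_tmul, one_smul] using h
  ext b
  show f (a * b) = f a • p b
  rw [smul_eq_mul]
  have inner2 : ∀ u v y : B, v ∈ N →
      (conv (conv (f u • p) (g ∘ₗ LinearMap.mulLeft k v)) (f ∘ₗ LinearMap.mulLeft k y)) b
        = (f u * g v) * f (y * b) := by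
    intro u v y hv
    rw [h4 v hv, conv_smul_left, conv_smul_right, h3, smul_smul, conv_smul_left,
      conv_counit_left]
    simp
  calc f (a * b)
      = ∑ t ∈ ra.index, Coalgebra.counit (R := k) (ra.left t) * f (ra.right t * b) := by
        have : ∑ t ∈ ra.index, Coalgebra.counit (R := k) (ra.left t) * f (ra.right t * b)
            = f ((∑ t ∈ ra.index, Coalgebra.counit (R := k) (ra.left t) • ra.right t) * b) := by
          rw [Finset.sum_mul, map_sum]
          exact Finset.sum_congr rfl fun t _ => by rw [smul_mul_assoc, map_smul, smul_eq_mul]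
        rw [this, haux1]
    _ = ∑ t ∈ ra.index, ∑ s ∈ (a₁ t).index,
          (conv (conv (f ((a₁ t).left s) • p) (g ∘ₗ LinearMap.mulLeft k ((a₁ t).right s)))
            (f ∘ₗ LinearMap.mulLeft k (ra.right t))) b := by
        refine Finset.sum_congr rfl fun t _ => ?_
        rw [Finset.sum_congr rfl fun s _ => inner2 ((a₁ t).left s) ((a₁ t).right s)
          (ra.right t) (ha₁mem t s), ← Finset.sum_mul, ← conv_apply_repr f g (a₁ t), h1]
    _ = ∑ t ∈ ra.index, ∑ s ∈ (a₂ t).index,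
          (conv (f (ra.left t) • p) (conv (g ∘ₗ LinearMap.mulLeft k ((a₂ t).left s))
            (f ∘ₗ LinearMap.mulLeft k ((a₂ t).right s)))) b := by
        have hco := Coalgebra.sum_tmul_tmul_eq (R := k) ra a₁ a₂
        have h := congrArg Λ hco
        simp only [map_sum, hΛ_apply] at h
        have h' := congrArg (fun (φ : B →ₗ[k] k) => φ b) h
        simp only [LinearMap.coe_sum, Finset.sum_apply] at h'
        rw [← h']
        refine Finset.sum_congr rfl fun t _ => Finset.sum_congr rfl fun s _ => ?_
        rw [conv_assoc]
    _ = ∑ t ∈ ra.index, (f (ra.left t) * Coalgebra.counit (R := k) (ra.right t)) * p b := by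
        refine Finset.sum_congr rfl fun t _ => ?_
        have mid : (∑ s ∈ (a₂ t).index, conv (g ∘ₗ LinearMap.mulLeft k ((a₂ t).left s))
            (f ∘ₗ LinearMap.mulLeft k ((a₂ t).right s)))
            = Coalgebra.counit (R := k) (ra.right t) • Coalgebra.counit := by
          ext b'
          have := (conv_mul_apply g f (a₂ t) b').symm
          simp only [LinearMap.coe_sum, Finset.sum_apply, LinearMap.smul_apply, smul_eq_mul]
          rw [this, h2, Bialgebra.counit_mul]
        have hsum : ∑ s ∈ (a₂ t).index, (conv (f (ra.left t) • p)
              (conv (g ∘ₗ LinearMap.mulLeft k ((a₂ t).left s))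
                (f ∘ₗ LinearMap.mulLeft k ((a₂ t).right s)))) b
            = (conv (f (ra.left t) • p) (∑ s ∈ (a₂ t).index,
                conv (g ∘ₗ LinearMap.mulLeft k ((a₂ t).left s))
                  (f ∘ₗ LinearMap.mulLeft k ((a₂ t).right s)))) b := by
          have hms := map_sum (convBil (k := k) (B := B) (f (ra.left t) • p))
            (fun s => conv (g ∘ₗ LinearMap.mulLeft k ((a₂ t).left s))
              (f ∘ₗ LinearMap.mulLeft k ((a₂ t).right s))) (a₂ t).index
          have := congrArg (fun (φ : B →ₗ[k] k) => φ b) hms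
          simp only [convBil_apply, LinearMap.coe_sum, Finset.sum_apply] at this
          exact this.symm
        rw [hsum, mid, conv_smul_left, conv_smul_right, conv_counit_right, smul_smul]
        simp
    _ = f a * p b := by
        have : ∑ t ∈ ra.index, f (ra.left t) * Coalgebra.counit (R := k) (ra.right t) = f a := by
          have : ∑ t ∈ ra.index, f (ra.left t) * Coalgebra.counit (R := k) (ra.right t)
              = f (∑ t ∈ ra.index, Coalgebra.counit (R := k) (ra.right t) • ra.left t) := by
            rw [map_sum]
            exact Finset.sum_congr rfl fun t _ => by rw [map_smul, smul_eq_mul, mul_comm]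
          rw [this, haux2]
        rw [← Finset.sum_mul, this]

end Key

/-- (Lemma 3.2 / `Esigma`): for a ℤ-graded bialgebra `B` satisfying the
twisting conditions and a family of convolution-invertible linear functionals `α i` with
convolution inverses `αinv i`, the four conditions are equivalent. Sweedler sums such as
`Σ α_i(a b_1) α_j(b_2)` are expressed as `conv (α i ∘ₗ mulLeft a) (α j) b`. -/
theorem statement0 {k B : Type*} [Field k] [Ring B] [Bialgebra k B]
    (𝒜 : ℤ → Submodule k B) [GradedAlgebra 𝒜]
    (hT2 : ∀ n : ℤ, ∀ b ∈ 𝒜 n,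
      Coalgebra.comul (R := k) b ∈ LinearMap.range (TensorProduct.mapIncl (𝒜 n) (𝒜 n)))
    (α αinv : ℤ → (B →ₗ[k] k))
    (hinv : ∀ i : ℤ, conv (α i) (αinv i) = Coalgebra.counit ∧
      conv (αinv i) (α i) = Coalgebra.counit) :
    List.TFAE
      [ ∀ (i j : ℤ), ∀ a ∈ 𝒜 j, ∀ b : B,
          conv ((α i) ∘ₗ LinearMap.mulLeft k a) (α j) b = α i a * α (i + j) b,
        ∀ (i j : ℤ), ∀ a ∈ 𝒜 j, ∀ b : B,
          α i (a * b) = α i a * conv (α (i + j)) (αinv j) b,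
        ∀ (i j : ℤ), ∀ a ∈ 𝒜 j, ∀ b : B,
          αinv i (a * b) = αinv i a * conv (α j) (αinv (i + j)) b,
        ∀ (i j : ℤ), ∀ a ∈ 𝒜 j, ∀ b : B,
          conv ((αinv i) ∘ₗ LinearMap.mulLeft k a) (α (i + j)) b = αinv i a * α j b ] := by
  have hP : ∀ i j : ℤ, conv (conv (α j) (αinv (i + j))) (conv (α (i + j)) (αinv j))
      = Coalgebra.counit := fun i j => conv_conv_conv _ _ _ _ (hinv (i + j)).2 (hinv j).1
  have hQ : ∀ i j : ℤ, conv (conv (α (i + j)) (αinv j)) (conv (α j) (αinv (i + j)))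
      = Coalgebra.counit := fun i j => conv_conv_conv _ _ _ _ (hinv j).2 (hinv (i + j)).1
  tfae_have 1 → 2 := by
    intro h i j a ha b
    have hfun : conv ((α i) ∘ₗ LinearMap.mulLeft k a) (α j) = α i a • α (i + j) :=
      LinearMap.ext fun b' => by rw [h i j a ha b']; simp
    have hres := easy1 _ _ (αinv j) (α (i + j)) (α i a) (hinv j).1 hfun
    have := congrArg (fun φ : B →ₗ[k] k => φ b) hres
    simpa using this
  tfae_have 2 → 1 := by
    intro h i j a ha b
    have hfun : (α i) ∘ₗ LinearMap.mulLeft k a = α i a • conv (α (i + j)) (αinv j) :=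
      LinearMap.ext fun b' => by simpa using h i j a ha b'
    have hres := easy2 _ (α j) (αinv j) (α (i + j)) (α i a) (hinv j).2 hfun
    have := congrArg (fun φ : B →ₗ[k] k => φ b) hres
    simpa using this
  tfae_have 2 → 3 := by
    intro h i j a ha b
    have h4 : ∀ v ∈ 𝒜 j, (α i) ∘ₗ LinearMap.mulLeft k v = α i v • conv (α (i + j)) (αinv j) :=
      fun v hv => LinearMap.ext fun b' => by simpa using h i j v hv b'
    have hres := key (𝒜 j) (hT2 j) (αinv i) (α i) (conv (α j) (αinv (i + j)))
      (conv (α (i + j)) (αinv j)) (hinv i).2 (hinv i).1 (hP i j) h4 ha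
    have := congrArg (fun φ : B →ₗ[k] k => φ b) hres
    simpa using this
  tfae_have 3 → 2 := by
    intro h i j a ha b
    have h4 : ∀ v ∈ 𝒜 j, (αinv i) ∘ₗ LinearMap.mulLeft k v
        = αinv i v • conv (α j) (αinv (i + j)) :=
      fun v hv => LinearMap.ext fun b' => by simpa using h i j v hv b'
    have hres := key (𝒜 j) (hT2 j) (α i) (αinv i) (conv (α (i + j)) (αinv j))
      (conv (α j) (αinv (i + j))) (hinv i).1 (hinv i).2 (hQ i j) h4 ha
    have := congrArg (fun φ : B →ₗ[k] k => φ b) hres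
    simpa using this
  tfae_have 3 → 4 := by
    intro h i j a ha b
    have hfun : (αinv i) ∘ₗ LinearMap.mulLeft k a = αinv i a • conv (α j) (αinv (i + j)) :=
      LinearMap.ext fun b' => by simpa using h i j a ha b'
    have hres := easy2 _ (α (i + j)) (αinv (i + j)) (α j) (αinv i a) (hinv (i + j)).2 hfun
    have := congrArg (fun φ : B →ₗ[k] k => φ b) hres
    simpa using this
  tfae_have 4 → 3 := by
    intro h i j a ha b
    have hfun : conv ((αinv i) ∘ₗ LinearMap.mulLeft k a) (α (i + j)) = αinv i a • α j :=
      LinearMap.ext fun b' => by rw [h i j a ha b']; simp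
    have hres := easy1 _ _ (αinv (i + j)) (α j) (αinv i a) (hinv (i + j)).1 hfun
    have := congrArg (fun φ : B →ₗ[k] k => φ b) hres
    simpa using this
  tfae_finish
end

section
/- Let H be a ℤ-graded Hopf algebra over a field k satisfying the twisting conditions, whose antipode S satisfies S(H_n) ⊆ H_{-n} for all n ∈ ℤ. Let α = {α_i}_{i∈ℤ} be a system of twisting functionals on H with convolution inverses {α_i^{-1}}. Then for all i, j ∈ ℤ, all integers m ≥ 0, and all homogeneous a ∈ H_j: α_i(S^m(a)) = α_i(a) if m is even and α_i(S^m(a)) = (α_{-j} * α_{i-j}^{-1})(a) if m is odd; likewise α_i^{-1}(S^m(a)) = α_i^{-1}(a) if m is even and α_i^{-1}(S^m(a)) = (α_{i-j} * α_{-j}^{-1})(a) if m is odd. -/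
open TensorProduct

section ConvBasic
variable {k B : Type*} [CommSemiring k] [AddCommMonoid B] [Module k B] [Coalgebra k B]

lemma conv_apply_repr_s7 (f g : B →ₗ[k] k) {a : B} {ι : Type*} (s : Finset ι) (x y : ι → B)
    (h : Coalgebra.comul (R := k) a = ∑ i ∈ s, x i ⊗ₜ[k] y i) :
    conv f g a = ∑ i ∈ s, f (x i) * g (y i) := by
  simp [conv, h, map_sum]

end ConvBasic
section ConvBialg
variable {k H : Type*} [CommSemiring k] [Semiring H] [Bialgebra k H]

lemma conv_one_apply (f g : H →ₗ[k] k) : conv f g 1 = f 1 * g 1 := by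
  simp [conv, Bialgebra.comul_one, Algebra.TensorProduct.one_def]

lemma comul_mul_repr {a b : H} {ι : Type*} (s : Finset ι) (x y : ι → H)
    (hx : Coalgebra.comul (R := k) a = ∑ i ∈ s, x i ⊗ₜ[k] y i) {κ : Type*} (r : Coalgebra.Repr k b κ) :
    Coalgebra.comul (R := k) (a * b) = ∑ q ∈ s ×ˢ r.index,
      (x q.1 * r.left q.2) ⊗ₜ[k] (y q.1 * r.right q.2) := by
  rw [Bialgebra.comul_mul, hx, ← r.eq, Finset.sum_mul_sum, Finset.sum_product]
  simp [Algebra.TensorProduct.tmul_mul_tmul]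

end ConvBialg

section Graded
open Coalgebra HopfAlgebra
variable {k H : Type*} [Field k] [Ring H] [HopfAlgebra k H]
    {𝒜 : ℤ → Submodule k H}
    {α αinv : ℤ → (H →ₗ[k] k)}

-- homogeneous representation
lemma hrepr (hT2 : ∀ n : ℤ, ∀ b ∈ 𝒜 n,
      Coalgebra.comul (R := k) b ∈ LinearMap.range (TensorProduct.mapIncl (𝒜 n) (𝒜 n)))
    {n : ℤ} {a : H} (ha : a ∈ 𝒜 n) :
    ∃ s : Finset ((𝒜 n) × (𝒜 n)),
      Coalgebra.comul (R := k) a = ∑ p ∈ s, (p.1 : H) ⊗ₜ[k] (p.2 : H) := by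
  obtain ⟨t, ht⟩ := hT2 n a ha
  obtain ⟨s, hs⟩ := TensorProduct.exists_finset (R := k) t
  refine ⟨s, ?_⟩
  rw [← ht, hs]
  simp [TensorProduct.mapIncl, map_sum]

section WithInv
variable (hinv : ∀ i : ℤ, conv (α i) (αinv i) = Coalgebra.counit ∧
      conv (αinv i) (α i) = Coalgebra.counit)

include hinv

lemma conv_cancel₁ (f : H →ₗ[k] k) (m : ℤ) : conv (conv f (α m)) (αinv m) = f := by
  rw [conv_assoc, (hinv m).1, conv_counit_right]

lemma conv_cancel₂ (f : H →ₗ[k] k) (m : ℤ) : conv (conv f (αinv m)) (α m) = f := by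
  rw [conv_assoc, (hinv m).2, conv_counit_right]

lemma conv_sandwich (f g : H →ₗ[k] k) (m : ℤ) :
    conv (conv f (αinv m)) (conv (α m) g) = conv f g := by
  rw [conv_assoc, ← conv_assoc (αinv m), (hinv m).2, conv_counit_left]

end WithInv

end Graded
section Weights
open Coalgebra HopfAlgebra
variable {k H : Type*} [Field k] [Ring H] [HopfAlgebra k H]
    {𝒜 : ℤ → Submodule k H}
    {α αinv : ℤ → (H →ₗ[k] k)}
    (hT2 : ∀ n : ℤ, ∀ b ∈ 𝒜 n,
      Coalgebra.comul (R := k) b ∈ LinearMap.range (TensorProduct.mapIncl (𝒜 n) (𝒜 n)))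
    (hinv : ∀ i : ℤ, conv (α i) (αinv i) = Coalgebra.counit ∧
      conv (αinv i) (α i) = Coalgebra.counit)
    (hone : ∀ i : ℤ, α i 1 = 1)
    (hsys : ∀ (i j : ℤ), ∀ a ∈ 𝒜 j, ∀ b : H,
      conv ((α i) ∘ₗ LinearMap.mulLeft k a) (α j) b = α i a * α (i + j) b)

include hinv hsys in
lemma wtα (i n : ℤ) : ∀ x ∈ 𝒜 n, ∀ c : H,
    α i (x * c) = α i x * conv (α (i + n)) (αinv n) c := by
  intro x hx c
  have e1 : conv ((α i) ∘ₗ LinearMap.mulLeft k x) (α n) = α i x • α (i + n) :=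
    LinearMap.ext fun b => by simpa using hsys i n x hx b
  have e2 : (α i) ∘ₗ LinearMap.mulLeft k x
      = conv (conv ((α i) ∘ₗ LinearMap.mulLeft k x) (α n)) (αinv n) :=
    (conv_cancel₁ hinv _ n).symm
  rw [e1, conv_smul_left] at e2
  have := LinearMap.congr_fun e2 c
  simpa using this

include hT2 hinv hone hsys in
lemma wtαinv (i n : ℤ) : ∀ x ∈ 𝒜 n, ∀ c : H,
    αinv i (x * c) = αinv i x * conv (α n) (αinv (i + n)) c := by
  -- Step 1
  have step1 : ∀ a ∈ 𝒜 n, ∀ b : H,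
      conv ((αinv i) ∘ₗ LinearMap.mulRight k b) (α i) a
        = Coalgebra.counit (R := k) a * conv (α n) (αinv (i + n)) b := by
    intro a ha b
    obtain ⟨s, hs⟩ := hrepr hT2 ha
    -- the linear functional G
    set G : H →ₗ[k] k :=
      ∑ p ∈ s, α i (p.2 : H) • ((αinv i) ∘ₗ LinearMap.mulLeft k (p.1 : H)) with hGdef
    have hG : ∀ b : H, G b = conv ((αinv i) ∘ₗ LinearMap.mulRight k b) (α i) a := by
      intro b
      rw [conv_apply_repr_s7 _ _ s (fun p => (p.1 : H)) (fun p => (p.2 : H)) hs]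
      simp [hGdef, LinearMap.sum_apply, mul_comm]
    have hGW : conv G (conv (α (i + n)) (αinv n)) =
        Coalgebra.counit (R := k) a • (Coalgebra.counit (R := k) (A := H)) := by
      ext b
      have r := Coalgebra.Repr.arbitrary k b
      rw [conv_apply_repr_s7 _ _ r.index r.left r.right r.eq.symm]
      have e3 : ∀ t ∈ r.index, G (r.left t) * conv (α (i + n)) (αinv n) (r.right t)
          = ∑ p ∈ s, αinv i ((p.1 : H) * r.left t) * α i ((p.2 : H) * r.right t) := by
        intro t _
        rw [hGdef]
        simp only [LinearMap.sum_apply, LinearMap.smul_apply, LinearMap.comp_apply,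
          LinearMap.mulLeft_apply, smul_eq_mul, Finset.sum_mul]
        refine Finset.sum_congr rfl fun p _ => ?_
        rw [wtα hinv hsys i n (p.2 : H) p.2.2 (r.right t)]
        ring
      rw [Finset.sum_congr rfl e3]
      rw [Finset.sum_comm]
      have e4 : ∀ p ∈ s, ∑ t ∈ r.index, αinv i ((p.1 : H) * r.left t) * α i ((p.2 : H) * r.right t)
          = ∑ q ∈ ({p} : Finset ((𝒜 n) × (𝒜 n))) ×ˢ r.index,
              αinv i ((q.1.1 : H) * r.left q.2) * α i ((q.1.2 : H) * r.right q.2) := by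
        intro p _
        rw [Finset.sum_product, Finset.sum_singleton]
      -- sum over s ×ˢ r.index
      have e5 : ∑ p ∈ s, ∑ t ∈ r.index,
            αinv i ((p.1 : H) * r.left t) * α i ((p.2 : H) * r.right t)
          = conv (αinv i) (α i) (a * b) := by
        rw [conv_apply_repr_s7 (αinv i) (α i) (s ×ˢ r.index)
          (fun q => (q.1.1 : H) * r.left q.2) (fun q => (q.1.2 : H) * r.right q.2)
          (comul_mul_repr s _ _ hs r), Finset.sum_product]
      rw [e5, (hinv i).2]
      simp [Bialgebra.counit_mul]
    have hGfinal : G = Coalgebra.counit (R := k) a • conv (α n) (αinv (i + n)) := by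
      have c1 : conv (conv (α (i + n)) (αinv n)) (conv (α n) (αinv (i + n)))
          = Coalgebra.counit (R := k) (A := H) := by
        rw [conv_sandwich hinv, (hinv (i + n)).1]
      have : G = conv (conv G (conv (α (i + n)) (αinv n))) (conv (α n) (αinv (i + n))) := by
        rw [conv_assoc, c1, conv_counit_right]
      rw [this, hGW, conv_smul_left, conv_counit_left]
    have := LinearMap.congr_fun hGfinal b
    rw [hG b] at this
    simpa using this
  -- Step 2
  intro x hx c
  obtain ⟨s, hs⟩ := hrepr hT2 hx
  have h1 : αinv i (x * c) =
      conv (conv ((αinv i) ∘ₗ LinearMap.mulRight k c) (α i)) (αinv i) x := by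
    rw [conv_assoc, (hinv i).1, conv_counit_right]
    simp
  rw [h1, conv_apply_repr_s7 _ _ s (fun p => (p.1 : H)) (fun p => (p.2 : H)) hs]
  have e6 : ∀ p ∈ s, conv ((αinv i) ∘ₗ LinearMap.mulRight k c) (α i) (p.1 : H) * αinv i (p.2 : H)
      = conv (α n) (αinv (i + n)) c * (Coalgebra.counit (R := k) (p.1 : H) * αinv i (p.2 : H)) := by
    intro p _
    rw [step1 (p.1 : H) p.1.2 c]
    ring
  rw [Finset.sum_congr rfl e6, ← Finset.mul_sum]
  have e7 : ∑ p ∈ s, Coalgebra.counit (R := k) (p.1 : H) * αinv i (p.2 : H) = αinv i x := by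
    rw [← conv_apply_repr_s7 Coalgebra.counit (αinv i) s _ _ hs, conv_counit_left]
  rw [e7]
  ring

end Weights
section Eval
open Coalgebra HopfAlgebra
variable {k H : Type*} [Field k] [Ring H] [HopfAlgebra k H]
    {𝒜 : ℤ → Submodule k H}
    {α αinv : ℤ → (H →ₗ[k] k)}
    (hT2 : ∀ n : ℤ, ∀ b ∈ 𝒜 n,
      Coalgebra.comul (R := k) b ∈ LinearMap.range (TensorProduct.mapIncl (𝒜 n) (𝒜 n)))
    (hS : ∀ n : ℤ, ∀ a ∈ 𝒜 n, HopfAlgebra.antipode (R := k) a ∈ 𝒜 (-n))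

include hT2 in
lemma wt_conv (n : ℤ) (f w g v : H →ₗ[k] k)
    (hf : ∀ x ∈ 𝒜 n, ∀ c : H, f (x * c) = f x * w c)
    (hg : ∀ x ∈ 𝒜 n, ∀ c : H, g (x * c) = g x * v c) :
    ∀ x ∈ 𝒜 n, ∀ c : H, conv f g (x * c) = conv f g x * conv w v c := by
  intro x hx c
  obtain ⟨s, hs⟩ := hrepr hT2 hx
  have r := Coalgebra.Repr.arbitrary k c
  rw [conv_apply_repr_s7 f g (s ×ˢ r.index)
    (fun q => (q.1.1 : H) * r.left q.2) (fun q => (q.1.2 : H) * r.right q.2)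
    (comul_mul_repr s _ _ hs r), Finset.sum_product,
    conv_apply_repr_s7 f g s (fun p => (p.1 : H)) (fun p => (p.2 : H)) hs,
    conv_apply_repr_s7 w v r.index r.left r.right r.eq.symm, Finset.sum_mul_sum]
  refine Finset.sum_congr rfl fun p _ => Finset.sum_congr rfl fun t _ => ?_
  rw [hf (p.1 : H) p.1.2 (r.left t), hg (p.2 : H) p.2.2 (r.right t)]
  ring

lemma antipode_mul_repr {x : H} {ι : Type*} (s : Finset ι) (u v : ι → H)
    (h : Coalgebra.comul (R := k) x = ∑ i ∈ s, u i ⊗ₜ[k] v i) :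
    ∑ i ∈ s, antipode (R := k) (u i) * v i = algebraMap k H (Coalgebra.counit (R := k) x) := by
  have := mul_antipode_rTensor_comul_apply (R := k) x
  rw [h] at this
  simpa [map_sum] using this

include hT2 hS in
lemma wt_eval (j : ℤ) (f u u' : H →ₗ[k] k)
    (hf : ∀ x ∈ 𝒜 (-j), ∀ c : H, f (x * c) = f x * u c)
    (huu' : conv u u' = Coalgebra.counit) :
    ∀ a ∈ 𝒜 j, f (antipode (R := k) a) = f 1 * u' a := by
  have stepA : ∀ x ∈ 𝒜 j, conv (f ∘ₗ antipode (R := k)) u x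
      = f 1 * Coalgebra.counit (R := k) x := by
    intro x hx
    obtain ⟨s, hs⟩ := hrepr hT2 hx
    rw [conv_apply_repr_s7 _ _ s (fun p => (p.1 : H)) (fun p => (p.2 : H)) hs]
    have e1 : ∀ p ∈ s, (f ∘ₗ antipode (R := k)) (p.1 : H) * u (p.2 : H)
        = f (antipode (R := k) (p.1 : H) * (p.2 : H)) := by
      intro p _
      rw [hf (antipode (R := k) (p.1 : H)) (hS j (p.1 : H) p.1.2) (p.2 : H)]
      simp
    rw [Finset.sum_congr rfl e1, ← map_sum, antipode_mul_repr s _ _ hs,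
      Algebra.algebraMap_eq_smul_one, map_smul, smul_eq_mul, mul_comm]
  intro a ha
  obtain ⟨s, hs⟩ := hrepr hT2 ha
  have h0 : f (antipode (R := k) a) = conv (conv (f ∘ₗ antipode (R := k)) u) u' a := by
    rw [conv_assoc, huu', conv_counit_right]
    simp
  rw [h0, conv_apply_repr_s7 _ _ s (fun p => (p.1 : H)) (fun p => (p.2 : H)) hs]
  have e2 : ∀ p ∈ s, conv (f ∘ₗ antipode (R := k)) u (p.1 : H) * u' (p.2 : H)
      = f 1 * (Coalgebra.counit (R := k) (p.1 : H) * u' (p.2 : H)) := by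
    intro p _
    rw [stepA (p.1 : H) p.1.2]
    ring
  rw [Finset.sum_congr rfl e2, ← Finset.mul_sum,
    ← conv_apply_repr_s7 Coalgebra.counit u' s _ _ hs, conv_counit_left]

end Eval
section Final
open Coalgebra HopfAlgebra
variable {k H : Type*} [Field k] [Ring H] [HopfAlgebra k H]
    {𝒜 : ℤ → Submodule k H}
    {α αinv : ℤ → (H →ₗ[k] k)}
    (hT2 : ∀ n : ℤ, ∀ b ∈ 𝒜 n,
      Coalgebra.comul (R := k) b ∈ LinearMap.range (TensorProduct.mapIncl (𝒜 n) (𝒜 n)))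
    (hS : ∀ n : ℤ, ∀ a ∈ 𝒜 n, HopfAlgebra.antipode (R := k) a ∈ 𝒜 (-n))
    (hinv : ∀ i : ℤ, conv (α i) (αinv i) = Coalgebra.counit ∧
      conv (αinv i) (α i) = Coalgebra.counit)
    (hone : ∀ i : ℤ, α i 1 = 1)
    (hzero : α 0 = Coalgebra.counit)
    (hsys : ∀ (i j : ℤ), ∀ a ∈ 𝒜 j, ∀ b : H,
      conv ((α i) ∘ₗ LinearMap.mulLeft k a) (α j) b = α i a * α (i + j) b)

include hinv hone in
lemma αinv_one (i : ℤ) : αinv i 1 = 1 := by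
  have := LinearMap.congr_fun (hinv i).1 1
  rw [conv_one_apply, hone i, one_mul] at this
  simpa using this

include hinv hzero in
lemma αinv_zero : αinv 0 = Coalgebra.counit (R := k) := by
  have := (hinv 0).1
  rwa [hzero, conv_counit_left] at this

include hT2 hS hinv hone hsys in
lemma lemA1 (i j : ℤ) : ∀ a ∈ 𝒜 j,
    α i (antipode (R := k) a) = conv (α (-j)) (αinv (i - j)) a := by
  intro a ha
  have huu' : conv (conv (α (i + -j)) (αinv (-j))) (conv (α (-j)) (αinv (i - j)))
      = Coalgebra.counit (R := k) (A := H) := by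
    rw [conv_sandwich hinv, ← sub_eq_add_neg, (hinv (i - j)).1]
  have := wt_eval hT2 hS j (α i) _ _ (wtα hinv hsys i (-j)) huu' a ha
  rwa [hone i, one_mul] at this

include hT2 hS hinv hone hsys in
lemma lemA2 (i j : ℤ) : ∀ a ∈ 𝒜 j,
    αinv i (antipode (R := k) a) = conv (α (i - j)) (αinv (-j)) a := by
  intro a ha
  have huu' : conv (conv (α (-j)) (αinv (i + -j))) (conv (α (i - j)) (αinv (-j)))
      = Coalgebra.counit (R := k) (A := H) := by
    rw [← sub_eq_add_neg, conv_sandwich hinv, (hinv (-j)).1]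
  have := wt_eval hT2 hS j (αinv i) _ _ (wtαinv hT2 hinv hone hsys i (-j)) huu' a ha
  rwa [αinv_one hinv hone i, one_mul] at this

include hT2 hS hinv hone hzero hsys in
lemma lemB1 (i j : ℤ) : ∀ a ∈ 𝒜 j,
    conv (α j) (αinv (i + j)) (antipode (R := k) a) = α i a := by
  intro a ha
  have hwv : conv (conv (α (j + -j)) (αinv (-j))) (conv (α (-j)) (αinv (i + j + -j)))
      = αinv i := by
    rw [conv_sandwich hinv, add_neg_cancel, add_neg_cancel_right, hzero, conv_counit_left]
  have hw : ∀ x ∈ 𝒜 (-j), ∀ c : H,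
      conv (α j) (αinv (i + j)) (x * c) = conv (α j) (αinv (i + j)) x * αinv i c := by
    intro x hx c
    rw [wt_conv hT2 (-j) (α j) _ (αinv (i + j)) _ (wtα hinv hsys j (-j))
      (wtαinv hT2 hinv hone hsys (i + j) (-j)) x hx c, hwv]
  have := wt_eval hT2 hS j (conv (α j) (αinv (i + j))) (αinv i) (α i) hw (hinv i).2 a ha
  rwa [conv_one_apply, hone j, αinv_one hinv hone (i + j), one_mul, one_mul] at this

include hT2 hS hinv hone hzero hsys in
lemma lemB2 (i j : ℤ) : ∀ a ∈ 𝒜 j,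
    conv (α (i + j)) (αinv j) (antipode (R := k) a) = αinv i a := by
  intro a ha
  have hwv : conv (conv (α (i + j + -j)) (αinv (-j))) (conv (α (-j)) (αinv (j + -j)))
      = α i := by
    rw [conv_sandwich hinv, add_neg_cancel, add_neg_cancel_right,
      αinv_zero hinv hzero, conv_counit_right]
  have hw : ∀ x ∈ 𝒜 (-j), ∀ c : H,
      conv (α (i + j)) (αinv j) (x * c) = conv (α (i + j)) (αinv j) x * α i c := by
    intro x hx c
    rw [wt_conv hT2 (-j) (α (i + j)) _ (αinv j) _ (wtα hinv hsys (i + j) (-j))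
      (wtαinv hT2 hinv hone hsys j (-j)) x hx c, hwv]
  have := wt_eval hT2 hS j (conv (α (i + j)) (αinv j)) (α i) (αinv i) hw (hinv i).1 a ha
  rwa [conv_one_apply, hone (i + j), αinv_one hinv hone j, one_mul, one_mul] at this

end Final

/-- Let `H` be a ℤ-graded Hopf algebra satisfying the twisting conditions
whose antipode `S` satisfies `S(H_n) ⊆ H_{-n}`, and let `α` be a system of twisting
functionals on `H` with convolution inverses `αinv`.  Then for homogeneous `a` of degree `j`,
`α_i(S^m(a)) = α_i(a)` for even `m` and `α_i(S^m(a)) = (α_{-j} * αinv_{i-j})(a)` for odd `m`;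
similarly `αinv_i(S^m(a)) = αinv_i(a)` for even `m` and `= (α_{i-j} * αinv_{-j})(a)` for
odd `m`. -/
theorem statement7 {k H : Type*} [Field k] [Ring H] [HopfAlgebra k H]
    (𝒜 : ℤ → Submodule k H) [GradedAlgebra 𝒜]
    (hT2 : ∀ n : ℤ, ∀ b ∈ 𝒜 n,
      Coalgebra.comul (R := k) b ∈ LinearMap.range (TensorProduct.mapIncl (𝒜 n) (𝒜 n)))
    (hS : ∀ n : ℤ, ∀ a ∈ 𝒜 n, HopfAlgebra.antipode (R := k) a ∈ 𝒜 (-n))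
    (α αinv : ℤ → (H →ₗ[k] k))
    (hinv : ∀ i : ℤ, conv (α i) (αinv i) = Coalgebra.counit ∧
      conv (αinv i) (α i) = Coalgebra.counit)
    (hone : ∀ i : ℤ, α i 1 = 1)
    (hzero : α 0 = Coalgebra.counit)
    (hsys : ∀ (i j : ℤ), ∀ a ∈ 𝒜 j, ∀ b : H,
      conv ((α i) ∘ₗ LinearMap.mulLeft k a) (α j) b = α i a * α (i + j) b) :
    ∀ (i j : ℤ) (m : ℕ), ∀ a ∈ 𝒜 j,
      (Even m → α i ((fun x => HopfAlgebra.antipode (R := k) x)^[m] a) = α i a) ∧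
      (Odd m → α i ((fun x => HopfAlgebra.antipode (R := k) x)^[m] a) =
        conv (α (-j)) (αinv (i - j)) a) ∧
      (Even m → αinv i ((fun x => HopfAlgebra.antipode (R := k) x)^[m] a) = αinv i a) ∧
      (Odd m → αinv i ((fun x => HopfAlgebra.antipode (R := k) x)^[m] a) =
        conv (α (i - j)) (αinv (-j)) a) := by
  intro i j m
  induction m generalizing i j with
  | zero =>
    intro a ha
    refine ⟨fun _ => rfl, fun h => ?_, fun _ => rfl, fun h => ?_⟩ <;>
      (rw [Nat.odd_iff] at h; omega)
  | succ m ih =>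
    intro a ha
    have haS : HopfAlgebra.antipode (R := k) a ∈ 𝒜 (-j) := hS j a ha
    have IH := ih i (-j) (HopfAlgebra.antipode (R := k) a) haS
    simp only [Function.iterate_succ_apply]
    refine ⟨fun h => ?_, fun h => ?_, fun h => ?_, fun h => ?_⟩
    · have hm : Odd m := by rw [Nat.odd_iff]; rw [Nat.even_iff] at h; omega
      have e := IH.2.1 hm
      rw [neg_neg, sub_neg_eq_add] at e
      rw [e]
      exact lemB1 hT2 hS hinv hone hzero hsys i j a ha
    · have hm : Even m := by rw [Nat.even_iff]; rw [Nat.odd_iff] at h; omega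
      rw [IH.1 hm]
      exact lemA1 hT2 hS hinv hone hsys i j a ha
    · have hm : Odd m := by rw [Nat.odd_iff]; rw [Nat.even_iff] at h; omega
      have e := IH.2.2.2 hm
      rw [neg_neg, sub_neg_eq_add] at e
      rw [e]
      exact lemB2 hT2 hS hinv hone hzero hsys i j a ha
    · have hm : Even m := by rw [Nat.even_iff]; rw [Nat.odd_iff] at h; omega
      rw [IH.2.2.1 hm]
      exact lemA2 hT2 hS hinv hone hsys i j a ha
end

section
/- Let H be a ℤ-graded Hopf algebra over a field k satisfying the twisting conditions, and let (τ, μ) be a twisting pair of H. Then the family {τ_i∘μ_i}_{i∈ℤ} is a twisting system of H. -/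
open TensorProduct

/-- A twisting system of a ℤ-graded algebra. -/
def IsTwistingSystem {k A : Type*} [CommSemiring k] [Semiring A] [Algebra k A]
    (𝒜 : ℤ → Submodule k A) (τ : ℤ → (A →ₗ[k] A)) : Prop :=
  (∀ i : ℤ, Function.Bijective (τ i)) ∧
  (∀ (i n : ℤ), ∀ a ∈ 𝒜 n, τ i a ∈ 𝒜 n) ∧
  (τ 0 = LinearMap.id) ∧
  (∀ i : ℤ, τ i 1 = 1) ∧
  (∀ (i j : ℤ), ∀ a ∈ 𝒜 j, ∀ b : A, τ i (a * τ j b) = τ i a * τ (i + j) b)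

lemma comul_injective {k H : Type*} [Field k] [Ring H] [HopfAlgebra k H] :
    Function.Injective (Coalgebra.comul (R := k) (A := H)) := by
  intro a b hab
  have := congrArg (fun x => (TensorProduct.lid k H) (LinearMap.rTensor H (Coalgebra.counit (R := k)) x)) hab
  simpa [Coalgebra.rTensor_counit_comul] using this

/-- For a twisting pair `(τ, μ)` of a ℤ-graded Hopf algebra `H` satisfying
the twisting conditions, the family `{τ_i ∘ μ_i}` is a twisting system of `H`. -/
theorem statement11 {k H : Type*} [Field k] [Ring H] [HopfAlgebra k H]
    (𝒜 : ℤ → Submodule k H) [GradedAlgebra 𝒜]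
    (hT2 : ∀ n : ℤ, ∀ b ∈ 𝒜 n,
      Coalgebra.comul (R := k) b ∈ LinearMap.range (TensorProduct.mapIncl (𝒜 n) (𝒜 n)))
    (τ μ : ℤ → (H →ₗ[k] H))
    (hτ : IsTwistingSystem 𝒜 τ) (hμ : IsTwistingSystem 𝒜 μ)
    (hP1τ : ∀ i : ℤ, Coalgebra.comul (R := k) ∘ₗ τ i =
      TensorProduct.map LinearMap.id (τ i) ∘ₗ Coalgebra.comul)
    (hP1μ : ∀ i : ℤ, Coalgebra.comul (R := k) ∘ₗ μ i =
      TensorProduct.map (μ i) LinearMap.id ∘ₗ Coalgebra.comul)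
    (hP2 : ∀ i : ℤ, Coalgebra.counit (R := k) ∘ₗ (τ i ∘ₗ μ i) = Coalgebra.counit) :
    IsTwistingSystem 𝒜 (fun i => τ i ∘ₗ μ i) := by
  obtain ⟨hτ1, hτ2, hτ3, hτ4, hτ5⟩ := hτ
  obtain ⟨hμ1, hμ2, hμ3, hμ4, hμ5⟩ := hμ
  -- key commutation: τ i ∘ μ j = μ j ∘ τ i
  have comm : ∀ (i j : ℤ) (x : H), τ i (μ j x) = μ j (τ i x) := by
    intro i j x
    apply comul_injective (k := k)
    have h1 : Coalgebra.comul (R := k) (τ i (μ j x)) =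
        TensorProduct.map (μ j) (τ i) (Coalgebra.comul x) := by
      have := congrFun (congrArg DFunLike.coe (hP1τ i)) (μ j x)
      simp only [LinearMap.coe_comp, Function.comp_apply] at this
      rw [this]
      have := congrFun (congrArg DFunLike.coe (hP1μ j)) x
      simp only [LinearMap.coe_comp, Function.comp_apply] at this
      rw [this, ← LinearMap.comp_apply, ← TensorProduct.map_comp]
      simp
    have h2 : Coalgebra.comul (R := k) (μ j (τ i x)) =
        TensorProduct.map (μ j) (τ i) (Coalgebra.comul x) := by
      have := congrFun (congrArg DFunLike.coe (hP1μ j)) (τ i x)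
      simp only [LinearMap.coe_comp, Function.comp_apply] at this
      rw [this]
      have := congrFun (congrArg DFunLike.coe (hP1τ i)) x
      simp only [LinearMap.coe_comp, Function.comp_apply] at this
      rw [this, ← LinearMap.comp_apply, ← TensorProduct.map_comp]
      simp
    rw [h1, h2]
  refine ⟨?_, ?_, ?_, ?_, ?_⟩
  · intro i
    exact (hτ1 i).comp (hμ1 i)
  · intro i n a ha
    exact hτ2 i n _ (hμ2 i n a ha)
  · simp [hτ3, hμ3]
  · intro i
    simp [hμ4 i, hτ4 i]
  · intro i j a ha b
    simp only [LinearMap.comp_apply]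
    rw [comm j j b, hμ5 i j a ha (τ j b), ← comm j (i + j) b,
      hτ5 i j (μ i a) (hμ2 i j a ha) (μ (i + j) b)]
end

section
/- Let H be a ℤ-graded Hopf algebra over a field k satisfying the twisting conditions, and let (τ, μ) be a twisting pair of H. Let σ, σ' : H × H → k be the bilinear maps determined by σ(x, y) = ε(x)·ε(τ_n(y)) and σ'(x, y) = ε(x)·ε(μ_n(y)) for all n ∈ ℤ, homogeneous x ∈ H_n, and y ∈ H. Then σ is a right 2-cocycle on H: Σ σ(x_1·y_1, z)·σ(x_2, y_2) = Σ σ(x, y_1·z_1)·σ(y_2, z_2) for all x, y, z ∈ H, and σ(x, 1) = σ(1, x) = ε(x); moreover σ' is the convolution inverse of σ, i.e., Σ σ(x_1, y_1)·σ'(x_2, y_2) = ε(x)ε(y) = Σ σ'(x_1, y_1)·σ(x_2, y_2) for all x, y ∈ H. -/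
open TensorProduct Coalgebra

section Aux12
variable {k H : Type*} [Field k] [Ring H] [HopfAlgebra k H]

/-- Convolution of two linear functionals on a coalgebra. -/
noncomputable def aconv12 (φ ψ : H →ₗ[k] k) : H →ₗ[k] k :=
  LinearMap.mul' k k ∘ₗ TensorProduct.map φ ψ ∘ₗ comul

lemma aconv12_rep (φ ψ : H →ₗ[k] k) {ι : Type*} (s : Finset ι) (a b : ι → H) (x : H)
    (h : comul (R := k) x = ∑ i ∈ s, a i ⊗ₜ[k] b i) :
    aconv12 φ ψ x = ∑ i ∈ s, φ (a i) * ψ (b i) := by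
  simp [aconv12, h, map_sum]

lemma lift_rep12 {M : Type*} [AddCommMonoid M] [Module k M]
    (G : H →ₗ[k] H →ₗ[k] M) {ι : Type*} (s : Finset ι) (a b : ι → H) (x : H)
    (h : comul (R := k) x = ∑ i ∈ s, a i ⊗ₜ[k] b i) :
    ∑ i ∈ s, G (a i) (b i) = TensorProduct.lift G (comul x) := by
  simp [h, map_sum]

lemma lift_add12 {M : Type*} [AddCommMonoid M] [Module k M]
    (F G : H →ₗ[k] H →ₗ[k] M) :
    TensorProduct.lift (F + G) = TensorProduct.lift F + TensorProduct.lift G := by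
  apply TensorProduct.ext'; intro a b; simp

lemma lift_zero12 {M : Type*} [AddCommMonoid M] [Module k M] :
    TensorProduct.lift (0 : H →ₗ[k] H →ₗ[k] M) = 0 := by
  apply TensorProduct.ext'; intro a b; simp

lemma aconv12_add_left (φ φ' ψ : H →ₗ[k] k) :
    aconv12 (φ + φ') ψ = aconv12 φ ψ + aconv12 φ' ψ := by
  simp [aconv12, TensorProduct.map_add_left, LinearMap.add_comp, LinearMap.comp_add]

lemma aconv12_smul_left (c : k) (φ ψ : H →ₗ[k] k) :
    aconv12 (c • φ) ψ = c • aconv12 φ ψ := by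
  simp [aconv12, TensorProduct.map_smul_left, LinearMap.smul_comp, LinearMap.comp_smul]

lemma aconv12_add_right (φ ψ ψ' : H →ₗ[k] k) :
    aconv12 φ (ψ + ψ') = aconv12 φ ψ + aconv12 φ ψ' := by
  simp [aconv12, TensorProduct.map_add_right, LinearMap.add_comp, LinearMap.comp_add]

lemma aconv12_smul_right (c : k) (φ ψ : H →ₗ[k] k) :
    aconv12 φ (c • ψ) = c • aconv12 φ ψ := by
  simp [aconv12, TensorProduct.map_smul_right, LinearMap.smul_comp, LinearMap.comp_smul]

lemma aconv12_counit_left (φ : H →ₗ[k] k) : aconv12 counit φ = φ := by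
  ext x
  have h1 : TensorProduct.map (counit (R := k) (A := H)) φ
      = TensorProduct.map LinearMap.id φ ∘ₗ LinearMap.rTensor H counit := by
    apply TensorProduct.ext'; intro a b; simp
  have h2 := Coalgebra.rTensor_counit_comul (R := k) x
  simp only [aconv12, LinearMap.comp_apply, h1, h2]
  simp

lemma aconv12_counit_right (φ : H →ₗ[k] k) : aconv12 φ counit = φ := by
  ext x
  have h1 : TensorProduct.map φ (counit (R := k) (A := H))
      = TensorProduct.map φ LinearMap.id ∘ₗ LinearMap.lTensor H counit := by
    apply TensorProduct.ext'; intro a b; simp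
  have h2 := Coalgebra.lTensor_counit_comul (R := k) x
  simp only [aconv12, LinearMap.comp_apply, h1, h2]
  simp

lemma aconv12_tau (T : H →ₗ[k] H)
    (hT : comul (R := k) ∘ₗ T = TensorProduct.map LinearMap.id T ∘ₗ comul)
    (φ : H →ₗ[k] k) : aconv12 φ (counit ∘ₗ T) = φ ∘ₗ T := by
  have h1 : TensorProduct.map φ (counit (R := k) (A := H) ∘ₗ T)
      = TensorProduct.map φ counit ∘ₗ TensorProduct.map LinearMap.id T := by
    apply TensorProduct.ext'; intro a b; simp
  have : aconv12 φ (counit ∘ₗ T)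
      = (aconv12 φ counit) ∘ₗ T := by
    simp only [aconv12, h1]
    rw [LinearMap.comp_assoc, LinearMap.comp_assoc, ← hT, ← LinearMap.comp_assoc,
      ← LinearMap.comp_assoc]
    rfl
  rw [this, aconv12_counit_right]

lemma aconv12_mu (T : H →ₗ[k] H)
    (hT : comul (R := k) ∘ₗ T = TensorProduct.map T LinearMap.id ∘ₗ comul)
    (φ : H →ₗ[k] k) : aconv12 (counit ∘ₗ T) φ = φ ∘ₗ T := by
  have h1 : TensorProduct.map (counit (R := k) (A := H) ∘ₗ T) φ
      = TensorProduct.map counit φ ∘ₗ TensorProduct.map T LinearMap.id := by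
    apply TensorProduct.ext'; intro a b; simp
  have : aconv12 (counit ∘ₗ T) φ = (aconv12 counit φ) ∘ₗ T := by
    simp only [aconv12, h1]
    rw [LinearMap.comp_assoc, LinearMap.comp_assoc, ← hT, ← LinearMap.comp_assoc,
      ← LinearMap.comp_assoc]
    rfl
  rw [this, aconv12_counit_left]

lemma homog_rep12 (𝒜 : ℤ → Submodule k H) (n : ℤ) (x : H) (hx : x ∈ 𝒜 n)
    (hT2 : comul (R := k) x ∈ LinearMap.range (TensorProduct.mapIncl (𝒜 n) (𝒜 n))) :
    ∃ s : Finset ((𝒜 n) × (𝒜 n)),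
      comul (R := k) x = ∑ p ∈ s, (p.1 : H) ⊗ₜ[k] (p.2 : H) := by
  obtain ⟨t, ht⟩ := hT2
  obtain ⟨s, hs⟩ := TensorProduct.exists_finset (R := k) t
  refine ⟨s, ?_⟩
  rw [← ht, hs]
  simp [TensorProduct.mapIncl]

end Aux12

set_option maxHeartbeats 2000000 in
/-- For a twisting pair `(τ, μ)` of a ℤ-graded Hopf algebra `H` satisfying
the twisting conditions, the bilinear maps `σ(x,y) = ε(x) ε(τ_n(y))` and
`σ'(x,y) = ε(x) ε(μ_n(y))` (for homogeneous `x` of degree `n`) satisfy: `σ` is a right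
2-cocycle, i.e. `Σ σ(x_1 y_1, z) σ(x_2, y_2) = Σ σ(x, y_1 z_1) σ(y_2, z_2)` and
`σ(x,1) = σ(1,x) = ε(x)`, and `σ'` is the convolution inverse of `σ`.  Sweedler sums are
expressed via arbitrary finite representations of the comultiplication. -/
theorem statement12 {k H : Type*} [Field k] [Ring H] [HopfAlgebra k H]
    (𝒜 : ℤ → Submodule k H) [GradedAlgebra 𝒜]
    (hT2 : ∀ n : ℤ, ∀ b ∈ 𝒜 n,
      Coalgebra.comul (R := k) b ∈ LinearMap.range (TensorProduct.mapIncl (𝒜 n) (𝒜 n)))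
    (τ μ : ℤ → (H →ₗ[k] H))
    (hτ : IsTwistingSystem 𝒜 τ) (hμ : IsTwistingSystem 𝒜 μ)
    (hP1τ : ∀ i : ℤ, Coalgebra.comul (R := k) ∘ₗ τ i =
      TensorProduct.map LinearMap.id (τ i) ∘ₗ Coalgebra.comul)
    (hP1μ : ∀ i : ℤ, Coalgebra.comul (R := k) ∘ₗ μ i =
      TensorProduct.map (μ i) LinearMap.id ∘ₗ Coalgebra.comul)
    (hP2 : ∀ i : ℤ, Coalgebra.counit (R := k) ∘ₗ (τ i ∘ₗ μ i) = Coalgebra.counit)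
    (σ σ' : H →ₗ[k] H →ₗ[k] k)
    (hσ : ∀ n : ℤ, ∀ x ∈ 𝒜 n, ∀ y : H,
      σ x y = Coalgebra.counit (R := k) x * Coalgebra.counit (R := k) (τ n y))
    (hσ' : ∀ n : ℤ, ∀ x ∈ 𝒜 n, ∀ y : H,
      σ' x y = Coalgebra.counit (R := k) x * Coalgebra.counit (R := k) (μ n y)) :
    (∀ (x y z : H) (ιx ιy ιz : Type) (sx : Finset ιx) (sy : Finset ιy) (sz : Finset ιz)
      (x1 x2 : ιx → H) (y1 y2 : ιy → H) (z1 z2 : ιz → H),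
      Coalgebra.comul (R := k) x = ∑ i ∈ sx, x1 i ⊗ₜ[k] x2 i →
      Coalgebra.comul (R := k) y = ∑ j ∈ sy, y1 j ⊗ₜ[k] y2 j →
      Coalgebra.comul (R := k) z = ∑ l ∈ sz, z1 l ⊗ₜ[k] z2 l →
      ∑ i ∈ sx, ∑ j ∈ sy, σ (x1 i * y1 j) z * σ (x2 i) (y2 j) =
        ∑ j ∈ sy, ∑ l ∈ sz, σ x (y1 j * z1 l) * σ (y2 j) (z2 l)) ∧
    (∀ x : H, σ x 1 = Coalgebra.counit (R := k) x ∧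
      σ 1 x = Coalgebra.counit (R := k) x) ∧
    (∀ (x y : H) (ιx ιy : Type) (sx : Finset ιx) (sy : Finset ιy)
      (x1 x2 : ιx → H) (y1 y2 : ιy → H),
      Coalgebra.comul (R := k) x = ∑ i ∈ sx, x1 i ⊗ₜ[k] x2 i →
      Coalgebra.comul (R := k) y = ∑ j ∈ sy, y1 j ⊗ₜ[k] y2 j →
      (∑ i ∈ sx, ∑ j ∈ sy, σ (x1 i) (y1 j) * σ' (x2 i) (y2 j) =
        Coalgebra.counit (R := k) x * Coalgebra.counit (R := k) y ∧
      ∑ i ∈ sx, ∑ j ∈ sy, σ' (x1 i) (y1 j) * σ (x2 i) (y2 j) =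
        Coalgebra.counit (R := k) x * Coalgebra.counit (R := k) y)) := by
  classical
  obtain ⟨hbij, hdeg, hzero, hone, hrel⟩ := hτ
  -- inverse of τ
  let τe : ℤ → (H ≃ₗ[k] H) := fun i => LinearEquiv.ofBijective (τ i) (hbij i)
  let τ' : ℤ → (H →ₗ[k] H) := fun i => (τe i).symm.toLinearMap
  have hττ' : ∀ (i : ℤ) (w : H), τ i (τ' i w) = w := fun i w => (τe i).apply_symm_apply w
  have hτ'τ : ∀ (i : ℤ) (w : H), τ' i (τ i w) = w := fun i w => (τe i).symm_apply_apply w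
  have hc1 : ∀ i : ℤ, TensorProduct.map (LinearMap.id (R := k) (M := H)) (τ' i) ∘ₗ
      TensorProduct.map LinearMap.id (τ i) = LinearMap.id := by
    intro i
    rw [← TensorProduct.map_comp]
    have h1 : τ' i ∘ₗ τ i = LinearMap.id := by ext w; simp [hτ'τ i w]
    rw [h1]
    simp [TensorProduct.map_id]
  have hc2 : ∀ i : ℤ, TensorProduct.map (LinearMap.id (R := k) (M := H)) (τ i) ∘ₗ
      TensorProduct.map LinearMap.id (τ' i) = LinearMap.id := by
    intro i
    rw [← TensorProduct.map_comp]
    have h1 : τ i ∘ₗ τ' i = LinearMap.id := by ext w; simp [hττ' i w]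
    rw [h1]
    simp [TensorProduct.map_id]
  have hP1τ' : ∀ i : ℤ, Coalgebra.comul (R := k) ∘ₗ τ' i =
      TensorProduct.map LinearMap.id (τ' i) ∘ₗ Coalgebra.comul := by
    intro i
    have hinj : Function.Injective
        (TensorProduct.map (LinearMap.id (R := k) (M := H)) (τ i)) := by
      intro u v huv
      have h2 := congr_arg (TensorProduct.map (LinearMap.id (R := k) (M := H)) (τ' i)) huv
      rwa [← LinearMap.comp_apply, ← LinearMap.comp_apply, hc1 i, LinearMap.id_apply,
        LinearMap.id_apply] at h2
    apply LinearMap.ext; intro w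
    apply hinj
    have h3 := LinearMap.congr_fun (hP1τ i) (τ' i w)
    simp only [LinearMap.comp_apply] at h3 ⊢
    rw [← h3, hττ' i w, ← LinearMap.comp_apply, hc2 i, LinearMap.id_apply]
  -- convolution identities
  have hgf : ∀ i : ℤ, aconv12 (Coalgebra.counit ∘ₗ μ i) (Coalgebra.counit ∘ₗ τ i)
      = (Coalgebra.counit : H →ₗ[k] k) := by
    intro i
    rw [aconv12_mu (μ i) (hP1μ i) (Coalgebra.counit ∘ₗ τ i), LinearMap.comp_assoc, hP2 i]
  have hgτ : ∀ i : ℤ, (Coalgebra.counit ∘ₗ μ i) ∘ₗ τ i = (Coalgebra.counit : H →ₗ[k] k) := by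
    intro i
    rw [← aconv12_tau (τ i) (hP1τ i) (Coalgebra.counit ∘ₗ μ i), hgf i]
  have hg : ∀ i : ℤ, Coalgebra.counit ∘ₗ μ i = (Coalgebra.counit : H →ₗ[k] k) ∘ₗ τ' i := by
    intro i
    apply LinearMap.ext; intro w
    have h4 := LinearMap.congr_fun (hgτ i) (τ' i w)
    simp only [LinearMap.comp_apply, hττ' i w] at h4 ⊢
    exact h4
  have hfg : ∀ i : ℤ, aconv12 (Coalgebra.counit ∘ₗ τ i) (Coalgebra.counit ∘ₗ μ i)
      = (Coalgebra.counit : H →ₗ[k] k) := by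
    intro i
    rw [hg i, aconv12_tau (τ' i) (hP1τ' i) (Coalgebra.counit ∘ₗ τ i)]
    apply LinearMap.ext; intro w
    simp [hττ' i w]
  -- σ, σ' on homogeneous first arguments
  have hσsm : ∀ (n : ℤ) (u : H), u ∈ 𝒜 n →
      σ u = Coalgebra.counit (R := k) u • (Coalgebra.counit ∘ₗ τ n) := by
    intro n u hu; apply LinearMap.ext; intro w
    simp [hσ n u hu w, smul_eq_mul]
  have hσ'sm : ∀ (n : ℤ) (u : H), u ∈ 𝒜 n →
      σ' u = Coalgebra.counit (R := k) u • (Coalgebra.counit ∘ₗ μ n) := by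
    intro n u hu; apply LinearMap.ext; intro w
    simp [hσ' n u hu w, smul_eq_mul]
  have hTop : ∀ w : H, w ∈ ⨆ n, 𝒜 n := by
    intro w
    rw [(DirectSum.Decomposition.isInternal 𝒜).submodule_iSup_eq_top]
    trivial
  refine ⟨?_, ?_, ?_⟩
  · -- the 2-cocycle identity
    intro x y z ιx ιy ιz sx sy sz x1 x2 y1 y2 z1 z2 hx hy hz
    have hmulLeft_add : ∀ a a' : H, LinearMap.mulLeft k (a + a')
        = LinearMap.mulLeft k a + LinearMap.mulLeft k a' := by
      intro a a'; ext w; simp [add_mul]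
    have hmulLeft_smul : ∀ (c : k) (a : H), LinearMap.mulLeft k (c • a)
        = c • LinearMap.mulLeft k a := by
      intro c a; ext w; simp [smul_mul_assoc]
    have hcomp_add : ∀ (f : H →ₗ[k] k) (g g' : H →ₗ[k] H),
        f ∘ₗ (g + g') = f ∘ₗ g + f ∘ₗ g' := by
      intro f g g'; ext w; simp
    have hcomp_smul : ∀ (f : H →ₗ[k] k) (c : k) (g : H →ₗ[k] H),
        f ∘ₗ (c • g) = c • (f ∘ₗ g) := by
      intro f c g; ext w; simp
    have haconv_zl : ∀ ψ : H →ₗ[k] k, aconv12 (0 : H →ₗ[k] k) ψ = 0 := by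
      intro ψ; simpa using aconv12_smul_left (0 : k) 0 ψ
    let A : H → (H →ₗ[k] H →ₗ[k] k) := fun v => LinearMap.mk₂ k
      (fun a b => aconv12 ((σ.flip z) ∘ₗ LinearMap.mulLeft k a) (σ b) v)
      (fun a a' b => by simp [hmulLeft_add, hcomp_add, aconv12_add_left])
      (fun c a b => by simp [hmulLeft_smul, hcomp_smul, aconv12_smul_left])
      (fun a b b' => by simp [map_add, aconv12_add_right])
      (fun c a b => by simp [map_smul, aconv12_smul_right])
    let D : H → (H →ₗ[k] H →ₗ[k] k) := fun w => LinearMap.mk₂ k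
      (fun c d => aconv12 ((σ w) ∘ₗ LinearMap.mulLeft k c) (σ d) z)
      (fun c c' d => by simp [hmulLeft_add, hcomp_add, aconv12_add_left])
      (fun e c d => by simp [hmulLeft_smul, hcomp_smul, aconv12_smul_left])
      (fun c d d' => by simp [map_add, aconv12_add_right])
      (fun e c d => by simp [map_smul, aconv12_smul_right])
    have hAapp : ∀ (v a b : H), A v a b
        = aconv12 ((σ.flip z) ∘ₗ LinearMap.mulLeft k a) (σ b) v := fun _ _ _ => rfl
    have hDapp : ∀ (w c d : H), D w c d
        = aconv12 ((σ w) ∘ₗ LinearMap.mulLeft k c) (σ d) z := fun _ _ _ => rfl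
    have hDadd : ∀ w w' : H, D (w + w') = D w + D w' := by
      intro w w'; ext c d
      simp only [LinearMap.add_apply, hDapp, map_add, LinearMap.add_comp, aconv12_add_left]
    have hDzero : D 0 = 0 := by
      ext c d
      simp only [hDapp, map_zero, LinearMap.zero_comp, haconv_zl]
      simp
    have hAadd : ∀ v v' : H, A (v + v') = A v + A v' := by
      intro v v'; ext a b
      simp only [LinearMap.add_apply, hAapp, map_add]
    have hAzero : A 0 = 0 := by
      ext a b
      simp only [hAapp, map_zero]
      simp
    have inner1 : ∀ i ∈ sx, ∑ j ∈ sy, σ (x1 i * y1 j) z * σ (x2 i) (y2 j)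
        = A y (x1 i) (x2 i) := by
      intro i _
      rw [hAapp, aconv12_rep _ _ sy y1 y2 y hy]
      simp
    have inner2 : ∀ j ∈ sy, ∑ l ∈ sz, σ x (y1 j * z1 l) * σ (y2 j) (z2 l)
        = D x (y1 j) (y2 j) := by
      intro j _
      rw [hDapp, aconv12_rep _ _ sz z1 z2 z hz]
      simp
    rw [Finset.sum_congr rfl inner1, Finset.sum_congr rfl inner2,
      lift_rep12 (A y) sx x1 x2 x hx, lift_rep12 (D x) sy y1 y2 y hy]
    -- main claim, by double induction on homogeneous components
    have key : ∀ w v : H,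
        TensorProduct.lift (A v) (Coalgebra.comul (R := k) w)
          = TensorProduct.lift (D w) (Coalgebra.comul (R := k) v) := by
      intro w
      refine Submodule.iSup_induction 𝒜 (motive := fun w => ∀ v : H,
        TensorProduct.lift (A v) (Coalgebra.comul (R := k) w)
          = TensorProduct.lift (D w) (Coalgebra.comul (R := k) v)) (hTop w) ?_ ?_ ?_
      · intro n u hu
        intro v
        refine Submodule.iSup_induction 𝒜 (motive := fun v =>
          TensorProduct.lift (A v) (Coalgebra.comul (R := k) u)
            = TensorProduct.lift (D u) (Coalgebra.comul (R := k) v)) (hTop v) ?_ ?_ ?_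
        · intro m v hv
          obtain ⟨s, hs⟩ := homog_rep12 𝒜 n u hu (hT2 n u hu)
          obtain ⟨t, ht⟩ := homog_rep12 𝒜 m v hv (hT2 m v hv)
          rw [← lift_rep12 (A v) s (fun p => (p.1 : H)) (fun p => (p.2 : H)) u hs]
          rw [← lift_rep12 (D u) t (fun q => (q.1 : H)) (fun q => (q.2 : H)) v ht]
          have hL : ∑ p ∈ s, A v (p.1 : H) (p.2 : H)
              = Coalgebra.counit (R := k) u * (Coalgebra.counit (R := k) (τ n v) *
                  Coalgebra.counit (R := k) (τ (n + m) z)) := by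
            calc ∑ p ∈ s, A v (p.1 : H) (p.2 : H)
                = ∑ p ∈ s, ∑ q ∈ t, σ ((p.1 : H) * (q.1 : H)) z * σ (p.2 : H) (q.2 : H) := by
                  refine Finset.sum_congr rfl fun p _ => ?_
                  rw [hAapp, aconv12_rep _ _ t (fun q => (q.1 : H)) (fun q => (q.2 : H)) v ht]
                  simp
              _ = ∑ p ∈ s, ∑ q ∈ t,
                    (Coalgebra.counit (R := k) (p.1 : H) * Coalgebra.counit (R := k) (p.2 : H)) *
                    ((Coalgebra.counit (R := k) (q.1 : H) *
                        Coalgebra.counit (R := k) (τ n (q.2 : H))) *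
                      Coalgebra.counit (R := k) (τ (n + m) z)) := by
                  refine Finset.sum_congr rfl fun p _ => Finset.sum_congr rfl fun q _ => ?_
                  rw [hσ (n + m) _ (SetLike.mul_mem_graded p.1.2 q.1.2) z,
                    Bialgebra.counit_mul, hσ n _ p.2.2]
                  ring
              _ = (∑ p ∈ s, Coalgebra.counit (R := k) (p.1 : H) *
                      Coalgebra.counit (R := k) (p.2 : H)) *
                    (∑ q ∈ t, (Coalgebra.counit (R := k) (q.1 : H) *
                        Coalgebra.counit (R := k) (τ n (q.2 : H))) *
                      Coalgebra.counit (R := k) (τ (n + m) z)) := by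
                  rw [Finset.sum_mul_sum]
              _ = Coalgebra.counit (R := k) u * (Coalgebra.counit (R := k) (τ n v) *
                    Coalgebra.counit (R := k) (τ (n + m) z)) := by
                  have e1 : ∑ p ∈ s, Coalgebra.counit (R := k) (p.1 : H) *
                      Coalgebra.counit (R := k) (p.2 : H) = Coalgebra.counit (R := k) u := by
                    rw [← aconv12_rep Coalgebra.counit Coalgebra.counit s _ _ u hs,
                      aconv12_counit_left]
                  have e2 : ∑ q ∈ t, Coalgebra.counit (R := k) (q.1 : H) *
                      Coalgebra.counit (R := k) (τ n (q.2 : H))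
                      = Coalgebra.counit (R := k) (τ n v) := by
                    have h5 := aconv12_rep (Coalgebra.counit) (Coalgebra.counit ∘ₗ τ n) t
                      (fun q => (q.1 : H)) (fun q => (q.2 : H)) v ht
                    simp only [LinearMap.comp_apply] at h5
                    rw [← h5, aconv12_counit_left, LinearMap.comp_apply]
                  rw [← Finset.sum_mul, e1, e2]
          have hR : ∑ q ∈ t, D u (q.1 : H) (q.2 : H)
              = Coalgebra.counit (R := k) u * (Coalgebra.counit (R := k) (τ n v) *
                  Coalgebra.counit (R := k) (τ (n + m) z)) := by
            calc ∑ q ∈ t, D u (q.1 : H) (q.2 : H)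
                = ∑ q ∈ t, ∑ l ∈ sz, σ u ((q.1 : H) * z1 l) * σ (q.2 : H) (z2 l) := by
                  refine Finset.sum_congr rfl fun q _ => ?_
                  rw [hDapp, aconv12_rep _ _ sz z1 z2 z hz]
                  simp
              _ = ∑ q ∈ t, ∑ l ∈ sz, Coalgebra.counit (R := k) u *
                    ((Coalgebra.counit (R := k) (τ n (q.1 : H)) *
                        Coalgebra.counit (R := k) (q.2 : H)) *
                      (Coalgebra.counit (R := k) (τ (n + m) (τ' m (z1 l))) *
                        Coalgebra.counit (R := k) (τ m (z2 l)))) := by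
                  refine Finset.sum_congr rfl fun q _ => Finset.sum_congr rfl fun l _ => ?_
                  rw [hσ n u hu, hσ m _ q.2.2]
                  have hz1 : (q.1 : H) * z1 l = (q.1 : H) * τ m (τ' m (z1 l)) := by
                    rw [hττ']
                  rw [hz1, hrel n m _ q.1.2 (τ' m (z1 l)), Bialgebra.counit_mul]
                  ring
              _ = Coalgebra.counit (R := k) u * ∑ q ∈ t, ∑ l ∈ sz,
                    (Coalgebra.counit (R := k) (τ n (q.1 : H)) *
                        Coalgebra.counit (R := k) (q.2 : H)) *
                      (Coalgebra.counit (R := k) (τ (n + m) (τ' m (z1 l))) *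
                        Coalgebra.counit (R := k) (τ m (z2 l))) := by
                  simp only [← Finset.mul_sum]
              _ = Coalgebra.counit (R := k) u *
                    ((∑ q ∈ t, Coalgebra.counit (R := k) (τ n (q.1 : H)) *
                        Coalgebra.counit (R := k) (q.2 : H)) *
                      (∑ l ∈ sz, Coalgebra.counit (R := k) (τ (n + m) (τ' m (z1 l))) *
                        Coalgebra.counit (R := k) (τ m (z2 l)))) := by
                  rw [Finset.sum_mul_sum]
              _ = Coalgebra.counit (R := k) u * (Coalgebra.counit (R := k) (τ n v) *
                    Coalgebra.counit (R := k) (τ (n + m) z)) := by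
                  have e3 : ∑ q ∈ t, Coalgebra.counit (R := k) (τ n (q.1 : H)) *
                      Coalgebra.counit (R := k) (q.2 : H)
                      = Coalgebra.counit (R := k) (τ n v) := by
                    have h5 := aconv12_rep (Coalgebra.counit ∘ₗ τ n) (Coalgebra.counit) t
                      (fun q => (q.1 : H)) (fun q => (q.2 : H)) v ht
                    simp only [LinearMap.comp_apply] at h5
                    rw [← h5, aconv12_counit_right, LinearMap.comp_apply]
                  have e4 : ∑ l ∈ sz, Coalgebra.counit (R := k) (τ (n + m) (τ' m (z1 l))) *
                      Coalgebra.counit (R := k) (τ m (z2 l))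
                      = Coalgebra.counit (R := k) (τ (n + m) z) := by
                    have h6 := aconv12_rep ((Coalgebra.counit ∘ₗ τ (n + m)) ∘ₗ τ' m)
                      (Coalgebra.counit ∘ₗ τ m) sz z1 z2 z hz
                    simp only [LinearMap.comp_apply] at h6
                    rw [← h6, aconv12_tau (τ m) (hP1τ m) _]
                    simp [hτ'τ]
                  rw [e3, e4]
          rw [hL, hR]
        · simp [hAzero, lift_zero12]
        · intro a b ha hb
          rw [hAadd, lift_add12, map_add, map_add]
          simp [ha, hb]
      · intro v
        rw [hDzero, lift_zero12]
        simp
      · intro a b ha hb v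
        rw [hDadd, lift_add12, map_add]
        simp [ha v, hb v]
    exact key x y
  · -- unital
    intro x
    constructor
    · refine Submodule.iSup_induction 𝒜 (motive := fun w => σ w 1 = Coalgebra.counit (R := k) w)
        (hTop x) ?_ ?_ ?_
      · intro n u hu
        rw [hσ n u hu 1, hone n, Bialgebra.counit_one, mul_one]
      · simp
      · intro a b ha hb
        simp [map_add, ha, hb]
    · rw [hσ 0 1 (SetLike.one_mem_graded 𝒜) x, hzero]
      simp
  · -- convolution inverse
    intro x y ιx ιy sx sy x1 x2 y1 y2 hx hy
    constructor
    · have step1 : ∀ i ∈ sx, ∑ j ∈ sy, σ (x1 i) (y1 j) * σ' (x2 i) (y2 j)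
          = aconv12 (σ (x1 i)) (σ' (x2 i)) y := by
        intro i _
        rw [aconv12_rep _ _ sy y1 y2 y hy]
      rw [Finset.sum_congr rfl step1]
      let F : H →ₗ[k] H →ₗ[k] k := LinearMap.mk₂ k (fun a b => aconv12 (σ a) (σ' b) y)
        (fun a a' b => by simp [map_add, aconv12_add_left])
        (fun c a b => by simp [map_smul, aconv12_smul_left])
        (fun a b b' => by simp [map_add, aconv12_add_right])
        (fun c a b => by simp [map_smul, aconv12_smul_right])
      have step2 : ∑ i ∈ sx, aconv12 (σ (x1 i)) (σ' (x2 i)) y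
          = TensorProduct.lift F (Coalgebra.comul (R := k) x) :=
        lift_rep12 F sx x1 x2 x hx
      rw [step2]
      refine Submodule.iSup_induction 𝒜 (motive := fun w =>
        TensorProduct.lift F (Coalgebra.comul (R := k) w)
          = Coalgebra.counit (R := k) w * Coalgebra.counit (R := k) y) (hTop x) ?_ ?_ ?_
      · intro n u hu
        obtain ⟨s, hs⟩ := homog_rep12 𝒜 n u hu (hT2 n u hu)
        rw [← lift_rep12 F s (fun p => (p.1 : H)) (fun p => (p.2 : H)) u hs]
        have hval : ∀ p ∈ s, F (p.1 : H) (p.2 : H)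
            = (Coalgebra.counit (R := k) (p.1 : H) * Coalgebra.counit (R := k) (p.2 : H))
              * Coalgebra.counit (R := k) y := by
          intro p _
          show aconv12 (σ (p.1 : H)) (σ' (p.2 : H)) y = _
          rw [hσsm n _ p.1.2, hσ'sm n _ p.2.2, aconv12_smul_left, aconv12_smul_right, hfg n]
          simp [smul_eq_mul]; ring
        rw [Finset.sum_congr rfl hval, ← Finset.sum_mul]
        congr 1
        rw [← aconv12_rep Coalgebra.counit Coalgebra.counit s _ _ u hs, aconv12_counit_left]
      · simp
      · intro a b ha hb
        simp [map_add, ha, hb, add_mul]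
    · have step1 : ∀ i ∈ sx, ∑ j ∈ sy, σ' (x1 i) (y1 j) * σ (x2 i) (y2 j)
          = aconv12 (σ' (x1 i)) (σ (x2 i)) y := by
        intro i _
        rw [aconv12_rep _ _ sy y1 y2 y hy]
      rw [Finset.sum_congr rfl step1]
      let F : H →ₗ[k] H →ₗ[k] k := LinearMap.mk₂ k (fun a b => aconv12 (σ' a) (σ b) y)
        (fun a a' b => by simp [map_add, aconv12_add_left])
        (fun c a b => by simp [map_smul, aconv12_smul_left])
        (fun a b b' => by simp [map_add, aconv12_add_right])
        (fun c a b => by simp [map_smul, aconv12_smul_right])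
      have step2 : ∑ i ∈ sx, aconv12 (σ' (x1 i)) (σ (x2 i)) y
          = TensorProduct.lift F (Coalgebra.comul (R := k) x) :=
        lift_rep12 F sx x1 x2 x hx
      rw [step2]
      refine Submodule.iSup_induction 𝒜 (motive := fun w =>
        TensorProduct.lift F (Coalgebra.comul (R := k) w)
          = Coalgebra.counit (R := k) w * Coalgebra.counit (R := k) y) (hTop x) ?_ ?_ ?_
      · intro n u hu
        obtain ⟨s, hs⟩ := homog_rep12 𝒜 n u hu (hT2 n u hu)
        rw [← lift_rep12 F s (fun p => (p.1 : H)) (fun p => (p.2 : H)) u hs]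
        have hval : ∀ p ∈ s, F (p.1 : H) (p.2 : H)
            = (Coalgebra.counit (R := k) (p.1 : H) * Coalgebra.counit (R := k) (p.2 : H))
              * Coalgebra.counit (R := k) y := by
          intro p _
          show aconv12 (σ' (p.1 : H)) (σ (p.2 : H)) y = _
          rw [hσ'sm n _ p.1.2, hσsm n _ p.2.2, aconv12_smul_left, aconv12_smul_right, hgf n]
          simp [smul_eq_mul]; ring
        rw [Finset.sum_congr rfl hval, ← Finset.sum_mul]
        congr 1
        rw [← aconv12_rep Coalgebra.counit Coalgebra.counit s _ _ u hs, aconv12_counit_left]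
      · simp
      · intro a b ha hb
        simp [map_add, ha, hb, add_mul]
end

section
/- Let H be a ℤ-graded Hopf algebra over a field k satisfying the twisting conditions, and let (τ, μ) be a twisting pair of H. Let σ, σ' : H × H → k be the bilinear maps determined by σ(x, y) = ε(x)·ε(τ_n(y)) and σ'(x, y) = ε(x)·ε(μ_n(y)) for all n ∈ ℤ, homogeneous x ∈ H_n, and y ∈ H. Then for every n ∈ ℤ, every homogeneous x ∈ H_n, and every y ∈ H: Σ σ'(x_1, y_1)·x_2·y_2·σ(x_3, y_3) = x·τ_n(μ_n(y)); that is, the 2-cocycle-twisted product on H coincides with the Zhang twist product of H by the twisting system {τ_i∘μ_i}_{i∈ℤ}. -/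
open TensorProduct

section Aux

variable {k H : Type*} [CommSemiring k] [Ring H] [Algebra k H]

/-- trilinear gadget: ((a⊗b)⊗c) ↦ (f a * g c) • h b -/
noncomputable def trip (f : H →ₗ[k] k) (h : H →ₗ[k] H) (g : H →ₗ[k] k) :
    (H ⊗[k] H) ⊗[k] H →ₗ[k] H :=
  (TensorProduct.lid k H).toLinearMap ∘ₗ (TensorProduct.rid k (k ⊗[k] H)).toLinearMap ∘ₗ
    TensorProduct.map (TensorProduct.map f h) g

lemma trip_tmul (f : H →ₗ[k] k) (h : H →ₗ[k] H) (g : H →ₗ[k] k) (a b c : H) :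
    trip f h g ((a ⊗ₜ[k] b) ⊗ₜ[k] c) = (f a * g c) • h b := by
  simp [trip, TensorProduct.smul_tmul', smul_smul, mul_comm]

variable [Coalgebra k H]

lemma sum_counit_smul_of_comul_eq {z : H} {ι : Type*} {s : Finset ι} {u v : ι → H}
    (hz : Coalgebra.comul (R := k) z = ∑ i ∈ s, u i ⊗ₜ[k] v i) :
    ∑ i ∈ s, Coalgebra.counit (R := k) (u i) • v i = z := by
  have h1 := congrArg (LinearMap.rTensor H (Coalgebra.counit (R := k))) hz
  rw [Coalgebra.rTensor_counit_comul, map_sum] at h1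
  have h2 := congrArg (TensorProduct.lid k H) h1
  simpa using h2.symm

lemma sum_smul_counit_of_comul_eq {z : H} {ι : Type*} {s : Finset ι} {u v : ι → H}
    (hz : Coalgebra.comul (R := k) z = ∑ i ∈ s, u i ⊗ₜ[k] v i) :
    ∑ i ∈ s, Coalgebra.counit (R := k) (v i) • u i = z := by
  have h1 := congrArg (LinearMap.lTensor H (Coalgebra.counit (R := k))) hz
  rw [Coalgebra.lTensor_counit_comul, map_sum] at h1
  have h2 := congrArg (TensorProduct.rid k H) h1
  simpa using h2.symm

end Aux

/-- For a twisting pair `(τ, μ)` of a ℤ-graded Hopf algebra `H` satisfying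
the twisting conditions, with `σ(x,y) = ε(x) ε(τ_n(y))` and `σ'(x,y) = ε(x) ε(μ_n(y))` for
homogeneous `x` of degree `n`: for all homogeneous `x ∈ H_n` and `y ∈ H`,
`Σ σ'(x_1, y_1) x_2 y_2 σ(x_3, y_3) = x · τ_n(μ_n(y))`, i.e. the 2-cocycle-twisted product
coincides with the Zhang twist product by `{τ_i ∘ μ_i}`.  Triple Sweedler sums are expressed
via nested finite representations of the comultiplication. -/
theorem statement13 {k H : Type*} [Field k] [Ring H] [HopfAlgebra k H]
    (𝒜 : ℤ → Submodule k H) [GradedAlgebra 𝒜]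
    (hT2 : ∀ n : ℤ, ∀ b ∈ 𝒜 n,
      Coalgebra.comul (R := k) b ∈ LinearMap.range (TensorProduct.mapIncl (𝒜 n) (𝒜 n)))
    (τ μ : ℤ → (H →ₗ[k] H))
    (hτ : IsTwistingSystem 𝒜 τ) (hμ : IsTwistingSystem 𝒜 μ)
    (hP1τ : ∀ i : ℤ, Coalgebra.comul (R := k) ∘ₗ τ i =
      TensorProduct.map LinearMap.id (τ i) ∘ₗ Coalgebra.comul)
    (hP1μ : ∀ i : ℤ, Coalgebra.comul (R := k) ∘ₗ μ i =
      TensorProduct.map (μ i) LinearMap.id ∘ₗ Coalgebra.comul)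
    (hP2 : ∀ i : ℤ, Coalgebra.counit (R := k) ∘ₗ (τ i ∘ₗ μ i) = Coalgebra.counit)
    (σ σ' : H →ₗ[k] H →ₗ[k] k)
    (hσ : ∀ n : ℤ, ∀ x ∈ 𝒜 n, ∀ y : H,
      σ x y = Coalgebra.counit (R := k) x * Coalgebra.counit (R := k) (τ n y))
    (hσ' : ∀ n : ℤ, ∀ x ∈ 𝒜 n, ∀ y : H,
      σ' x y = Coalgebra.counit (R := k) x * Coalgebra.counit (R := k) (μ n y)) :
    ∀ n : ℤ, ∀ x ∈ 𝒜 n, ∀ y : H,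
    ∀ (ιx ιy ιx' ιy' : Type) (sx : Finset ιx) (sy : Finset ιy)
      (x1 x2 : ιx → H) (y1 y2 : ιy → H)
      (sx' : ιx → Finset ιx') (sy' : ιy → Finset ιy')
      (x11 x12 : ιx → ιx' → H) (y11 y12 : ιy → ιy' → H),
      Coalgebra.comul (R := k) x = ∑ i ∈ sx, x1 i ⊗ₜ[k] x2 i →
      Coalgebra.comul (R := k) y = ∑ j ∈ sy, y1 j ⊗ₜ[k] y2 j →
      (∀ i ∈ sx, Coalgebra.comul (R := k) (x1 i) = ∑ p ∈ sx' i, x11 i p ⊗ₜ[k] x12 i p) →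
      (∀ j ∈ sy, Coalgebra.comul (R := k) (y1 j) = ∑ q ∈ sy' j, y11 j q ⊗ₜ[k] y12 j q) →
      ∑ i ∈ sx, ∑ j ∈ sy, ∑ p ∈ sx' i, ∑ q ∈ sy' j,
        (σ' (x11 i p) (y11 j q) * σ (x2 i) (y2 j)) • (x12 i p * y12 j q) =
        x * τ n (μ n y) := by
  intro n x hx y ιx ιy ιx' ιy' sx sy x1 x2 y1 y2 sx' sy' x11 x12 y11 y12 hcx hcy hcx1 hcy1
  classical
  set Φ : (H ⊗[k] H) ⊗[k] H →ₗ[k] H :=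
    ∑ j ∈ sy, ∑ q ∈ sy' j,
      trip (σ'.flip (y11 j q)) (LinearMap.mulRight k (y12 j q)) (σ.flip (y2 j)) with hΦdef
  have hΦ : ∀ a b c : H, Φ ((a ⊗ₜ[k] b) ⊗ₜ[k] c) =
      ∑ j ∈ sy, ∑ q ∈ sy' j, (σ' a (y11 j q) * σ c (y2 j)) • (b * y12 j q) := by
    intro a b c
    simp [hΦdef, LinearMap.sum_apply, trip_tmul]
  set g0 : H := ∑ j ∈ sy, ∑ q ∈ sy' j,
      (Coalgebra.counit (R := k) (μ n (y11 j q)) *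
        Coalgebra.counit (R := k) (τ n (y2 j))) • y12 j q with hg0
  -- evaluation of Φ on comul c ⊗ b for homogeneous c, b
  have key : ∀ c ∈ 𝒜 n, ∀ b ∈ 𝒜 n, Φ ((Coalgebra.comul (R := k) c) ⊗ₜ[k] b) =
      Coalgebra.counit (R := k) b • (c * g0) := by
    intro c hc b hb
    obtain ⟨t, ht⟩ := hT2 n c hc
    obtain ⟨S, rfl⟩ := TensorProduct.exists_finset t
    have hct : Coalgebra.comul (R := k) c = ∑ r ∈ S, (r.1 : H) ⊗ₜ[k] (r.2 : H) := by
      rw [← ht]; simp [TensorProduct.mapIncl, map_sum]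
    have hc' : ∑ r ∈ S, Coalgebra.counit (R := k) (r.1 : H) • (r.2 : H) = c :=
      sum_counit_smul_of_comul_eq hct
    rw [hct, TensorProduct.sum_tmul, map_sum, ← hc', Finset.sum_mul, Finset.smul_sum]
    refine Finset.sum_congr rfl fun r _ => ?_
    rw [hΦ]
    simp only [hg0, Finset.mul_sum, Finset.smul_sum, mul_smul_comm, smul_mul_assoc, smul_smul]
    refine Finset.sum_congr rfl fun j hj => Finset.sum_congr rfl fun q hq => ?_
    rw [hσ' n _ r.1.2 (y11 j q), hσ n b hb (y2 j)]
    congr 1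
    ring
  -- two descriptions of (Δ ⊗ id) Δ x
  have hX1 : (LinearMap.rTensor H (Coalgebra.comul (R := k))) (Coalgebra.comul (R := k) x)
      = ∑ i ∈ sx, ∑ p ∈ sx' i, (x11 i p ⊗ₜ[k] x12 i p) ⊗ₜ[k] x2 i := by
    rw [hcx, map_sum]
    refine Finset.sum_congr rfl fun i hi => ?_
    rw [LinearMap.rTensor_tmul, hcx1 i hi, TensorProduct.sum_tmul]
  obtain ⟨t, ht⟩ := hT2 n x hx
  obtain ⟨S, rfl⟩ := TensorProduct.exists_finset t
  have hcx' : Coalgebra.comul (R := k) x = ∑ r ∈ S, (r.1 : H) ⊗ₜ[k] (r.2 : H) := by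
    rw [← ht]; simp [TensorProduct.mapIncl, map_sum]
  have hX2 : (LinearMap.rTensor H (Coalgebra.comul (R := k))) (Coalgebra.comul (R := k) x)
      = ∑ r ∈ S, (Coalgebra.comul (R := k) (r.1 : H)) ⊗ₜ[k] (r.2 : H) := by
    rw [hcx', map_sum]
    exact Finset.sum_congr rfl fun r _ => LinearMap.rTensor_tmul _ _ _ _
  have hinner : ∀ j ∈ sy, ∑ q ∈ sy' j,
      Coalgebra.counit (R := k) (μ n (y11 j q)) • y12 j q = μ n (y1 j) := by
    intro j hj
    refine sum_counit_smul_of_comul_eq ?_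
    have h1 := LinearMap.congr_fun (hP1μ n) (y1 j)
    simp only [LinearMap.comp_apply] at h1
    rw [h1, hcy1 j hj, map_sum]
    simp
  have houter : Coalgebra.comul (R := k) (τ n (μ n y))
      = ∑ j ∈ sy, μ n (y1 j) ⊗ₜ[k] τ n (y2 j) := by
    have h1 := LinearMap.congr_fun (hP1μ n) y
    have h2 := LinearMap.congr_fun (hP1τ n) (μ n y)
    simp only [LinearMap.comp_apply] at h1 h2
    rw [h2, h1, hcy, map_sum, map_sum]
    simp
  have hg : g0 = τ n (μ n y) := by
    rw [← sum_smul_counit_of_comul_eq houter, hg0]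
    refine Finset.sum_congr rfl fun j hj => ?_
    rw [← hinner j hj, Finset.smul_sum]
    refine Finset.sum_congr rfl fun q hq => ?_
    rw [smul_smul, mul_comm]
  -- put everything together
  have hL : ∑ i ∈ sx, ∑ j ∈ sy, ∑ p ∈ sx' i, ∑ q ∈ sy' j,
        (σ' (x11 i p) (y11 j q) * σ (x2 i) (y2 j)) • (x12 i p * y12 j q)
      = Φ ((LinearMap.rTensor H (Coalgebra.comul (R := k))) (Coalgebra.comul (R := k) x)) := by
    rw [hX1, map_sum]
    refine Finset.sum_congr rfl fun i _ => ?_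
    rw [Finset.sum_comm, map_sum]
    exact Finset.sum_congr rfl fun p _ => (hΦ _ _ _).symm
  rw [hL, hX2, map_sum]
  calc ∑ r ∈ S, Φ ((Coalgebra.comul (R := k) (r.1 : H)) ⊗ₜ[k] (r.2 : H))
      = ∑ r ∈ S, Coalgebra.counit (R := k) (r.2 : H) • ((r.1 : H) * g0) :=
        Finset.sum_congr rfl fun r _ => key _ r.1.2 _ r.2.2
    _ = (∑ r ∈ S, Coalgebra.counit (R := k) (r.2 : H) • (r.1 : H)) * g0 := by
        rw [Finset.sum_mul]
        exact Finset.sum_congr rfl fun r _ => (smul_mul_assoc _ _ _).symm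
    _ = x * τ n (μ n y) := by rw [sum_smul_counit_of_comul_eq hcx', hg]
end

section
/- Let k be a field, H a ℤ-graded bialgebra over k with counit ε, and A a ℤ-graded k-algebra. Let ρ : A → A⊗H be a k-linear map such that (id_A⊗ε)∘ρ = id_A and ρ(A_n) ⊆ A_n⊗H_n for all n ∈ ℤ. Suppose f_i : H → H and τ_i : A → A (i ∈ ℤ) are k-linear maps with (id_A⊗f_i)∘ρ = ρ∘τ_i for all i, and let σ : H × H → k be the bilinear map determined by σ(x, y) = ε(x)·ε(f_n(y)) for all n ∈ ℤ, homogeneous x ∈ H_n, and y ∈ H. Then for every n ∈ ℤ, homogeneous a ∈ A_n, and b ∈ A, writing ρ(a) = Σ a_0⊗a_1 and ρ(b) = Σ b_0⊗b_1: Σ a_0·b_0·σ(a_1, b_1) = a·τ_n(b). -/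
open TensorProduct

noncomputable def statement14.Phi (k : Type*) {A H : Type*} [Field k] [Ring A] [Algebra k A]
    [Ring H] [Algebra k H] (σ' : H →ₗ[k] H →ₗ[k] k) :
    (A ⊗[k] H) ⊗[k] (A ⊗[k] H) →ₗ[k] A :=
  (TensorProduct.rid k A).toLinearMap ∘ₗ
    TensorProduct.map (LinearMap.mul' k A) (TensorProduct.lift σ') ∘ₗ
    (TensorProduct.tensorTensorTensorComm k A H A H).toLinearMap

lemma statement14.Phi_tmul (k : Type*) {A H : Type*} [Field k] [Ring A] [Algebra k A]
    [Ring H] [Algebra k H] (σ' : H →ₗ[k] H →ₗ[k] k)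
    (a0 b0 : A) (a1 b1 : H) :
    statement14.Phi k σ' ((a0 ⊗ₜ[k] a1) ⊗ₜ[k] (b0 ⊗ₜ[k] b1)) = σ' a1 b1 • (a0 * b0) := by
  simp [statement14.Phi, TensorProduct.smul_tmul']

/-- Let `H` be a ℤ-graded bialgebra, `A` a ℤ-graded algebra, and
`ρ : A → A ⊗ H` a linear map with `(id ⊗ ε) ∘ ρ = id` and `ρ(A_n) ⊆ A_n ⊗ H_n`.  Suppose
`f_i : H → H` and `τ_i : A → A` satisfy `(id ⊗ f_i) ∘ ρ = ρ ∘ τ_i`, and `σ` is the bilinear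
map with `σ(x,y) = ε(x) ε(f_n(y))` for homogeneous `x ∈ H_n`.  Then for homogeneous
`a ∈ A_n` and any `b`, writing `ρ(a) = Σ a_0 ⊗ a_1` and `ρ(b) = Σ b_0 ⊗ b_1` (as arbitrary
finite representations), `Σ a_0 b_0 σ(a_1, b_1) = a · τ_n(b)`. -/
theorem statement14 {k H A : Type*} [Field k] [Ring H] [Bialgebra k H]
    [Ring A] [Algebra k A]
    (ℋ : ℤ → Submodule k H) [GradedAlgebra ℋ]
    (𝒜 : ℤ → Submodule k A) [GradedAlgebra 𝒜]
    (ρ : A →ₗ[k] A ⊗[k] H)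
    (hcounit : ∀ a : A,
      (TensorProduct.rid k A) ((TensorProduct.map LinearMap.id Coalgebra.counit) (ρ a)) = a)
    (hgr : ∀ n : ℤ, ∀ a ∈ 𝒜 n,
      ρ a ∈ LinearMap.range (TensorProduct.map (𝒜 n).subtype (ℋ n).subtype))
    (f : ℤ → (H →ₗ[k] H)) (τ : ℤ → (A →ₗ[k] A))
    (hcompat : ∀ (i : ℤ) (a : A),
      (TensorProduct.map LinearMap.id (f i)) (ρ a) = ρ (τ i a))
    (σ : H →ₗ[k] H →ₗ[k] k)
    (hσ : ∀ n : ℤ, ∀ x ∈ ℋ n, ∀ y : H,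
      σ x y = Coalgebra.counit (R := k) x * Coalgebra.counit (R := k) (f n y)) :
    ∀ n : ℤ, ∀ a ∈ 𝒜 n, ∀ b : A,
    ∀ (ιa ιb : Type) (sa : Finset ιa) (sb : Finset ιb)
      (a0 : ιa → A) (a1 : ιa → H) (b0 : ιb → A) (b1 : ιb → H),
      ρ a = ∑ i ∈ sa, a0 i ⊗ₜ[k] a1 i →
      ρ b = ∑ j ∈ sb, b0 j ⊗ₜ[k] b1 j →
      ∑ i ∈ sa, ∑ j ∈ sb, σ (a1 i) (b1 j) • (a0 i * b0 j) = a * τ n b := by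
  intro n a ha b ιa ιb sa sb a0 a1 b0 b1 hra hrb
  -- the "model" bilinear form for degree n
  set σn : H →ₗ[k] H →ₗ[k] k := LinearMap.mk₂ k
      (fun x y => Coalgebra.counit (R := k) x * Coalgebra.counit (R := k) (f n y))
      (fun x x' y => by simp [add_mul])
      (fun c x y => by simp only [map_smul, smul_eq_mul]; ring)
      (fun x y y' => by simp [mul_add])
      (fun c x y => by simp only [map_smul, smul_eq_mul]; ring) with hσn
  -- counit-evaluation map
  set E : A ⊗[k] H →ₗ[k] A :=
    (TensorProduct.rid k A).toLinearMap ∘ₗ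
      TensorProduct.map LinearMap.id (Coalgebra.counit (R := k)) with hE
  -- Step 1: the LHS is Phi σ applied to ρ a ⊗ ρ b
  have step1 : ∑ i ∈ sa, ∑ j ∈ sb, σ (a1 i) (b1 j) • (a0 i * b0 j)
      = statement14.Phi k σ (ρ a ⊗ₜ[k] ρ b) := by
    rw [hra, hrb, TensorProduct.sum_tmul]
    rw [map_sum]
    refine Finset.sum_congr rfl fun i _ => ?_
    rw [TensorProduct.tmul_sum, map_sum]
    exact Finset.sum_congr rfl fun j _ => (statement14.Phi_tmul k σ _ _ _ _).symm
  -- Step 2: on ρ a ⊗ anything, Phi σ = Phi σn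
  have step2 : statement14.Phi k σ (ρ a ⊗ₜ[k] ρ b)
      = statement14.Phi k σn (ρ a ⊗ₜ[k] ρ b) := by
    obtain ⟨z, hz⟩ := hgr n a ha
    rw [← hz]
    clear hz hra step1
    generalize ρ b = v
    induction z using TensorProduct.induction_on with
    | zero => simp
    | add u w hu hw =>
        rw [map_add, TensorProduct.add_tmul, map_add, map_add, hu, hw]
    | tmul x y =>
        simp only [TensorProduct.map_tmul, Submodule.coe_subtype]
        induction v using TensorProduct.induction_on with
        | zero => simp
        | add u w hu hw => rw [TensorProduct.tmul_add, map_add, map_add, hu, hw]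
        | tmul p q =>
            rw [statement14.Phi_tmul, statement14.Phi_tmul]
            congr 1
            rw [hσ n y.1 y.2 q]
            simp [hσn]
  -- Step 3: express Phi σn via the counit evaluations
  have step3 : ∀ (u v : A ⊗[k] H),
      statement14.Phi k σn (u ⊗ₜ[k] v)
        = E u * E ((TensorProduct.map LinearMap.id (f n)) v) := by
    intro u v
    induction u using TensorProduct.induction_on with
    | zero => simp [TensorProduct.zero_tmul]
    | add u w hu hw =>
        rw [TensorProduct.add_tmul, map_add, hu, hw, map_add, add_mul]
    | tmul p q =>
        induction v using TensorProduct.induction_on with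
        | zero => simp [TensorProduct.tmul_zero]
        | add u w hu hw =>
            rw [TensorProduct.tmul_add, map_add, hu, hw, map_add, map_add, mul_add]
        | tmul r s =>
            rw [statement14.Phi_tmul]
            have h1 : E (p ⊗ₜ[k] q) = Coalgebra.counit (R := k) q • p := by
              rw [hE]; simp
            have h2 : E ((TensorProduct.map LinearMap.id (f n)) (r ⊗ₜ[k] s))
                = Coalgebra.counit (R := k) ((f n) s) • r := by
              rw [TensorProduct.map_tmul, hE]; simp
            rw [h1, h2, smul_mul_assoc, mul_smul_comm, smul_smul]
            congr 1
  rw [step1, step2, step3]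
  have h1 : E (ρ a) = a := hcounit a
  have h2 : E ((TensorProduct.map LinearMap.id (f n)) (ρ b)) = τ n b := by
    rw [hcompat n b]; exact hcounit (τ n b)
  rw [h1, h2]
end
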